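/- arXiv:0904.3938 — 6 statements merged into one kernel-verified Lean document; each statement's English description precedes it below -/
import Mathlib

section
/- Let p be an odd prime. With π_i as above, the field ℚ_p(μ_{p^n}) decomposes as a ℚ_p-vector space into the direct sum ⊕_{i=0}^{n} ℚ_p^{(i)}, where ℚ_p^{(i)} is the ℚ_p-span of the Galois conjugates {π_i^σ : σ ∈ Gal(ℚ_p(μ_{p^i})/ℚ_p)}. -/
open IntermediateField

section Aux

open Polynomial

private lemma pow_mod_eq' {M : Type*} [Monoid M] {z : M} {N : ℕ} (h : z ^ N = 1) (t : ℕ) :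
    z ^ t = z ^ (t % N) := by
  conv_lhs => rw [← Nat.div_add_mod t N]
  rw [pow_add, pow_mul, h, one_pow, one_mul]

private theorem cyclo_irr' (p : ℕ) [hp : Fact p.Prime] (k : ℕ) :
    Irreducible (Polynomial.cyclotomic (p ^ (k + 1)) ℚ_[p]) := by
  have hmono : (cyclotomic (p ^ (k + 1)) ℤ_[p]).Monic := cyclotomic.monic _ _
  rw [← map_cyclotomic (p ^ (k+1)) (algebraMap ℤ_[p] ℚ_[p]),
    ← hmono.irreducible_iff_irreducible_map_fraction_map]
  set g : ℤ_[p][X] := (cyclotomic (p ^ (k + 1)) ℤ_[p]).comp (X + C 1) with hg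
  have hmapg : g = ((cyclotomic (p ^ (k + 1)) ℤ).comp (X + C 1)).map (Int.castRingHom ℤ_[p]) := by
    rw [Polynomial.map_comp, map_cyclotomic, Polynomial.map_add, Polynomial.map_X,
      Polynomial.map_C]
    rw [hg]
    norm_num
  have hgmonic : g.Monic :=
    hmono.comp (monic_X_add_C 1) (by rw [natDegree_X_add_C]; exact one_ne_zero)
  have hgdeg : g.natDegree = (p ^ (k+1)).totient := by
    rw [hg, natDegree_comp, natDegree_X_add_C, natDegree_cyclotomic, mul_one]
  have hgZdeg : ((cyclotomic (p ^ (k + 1)) ℤ).comp (X + C 1)).natDegree = (p ^ (k+1)).totient := by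
    rw [natDegree_comp, natDegree_X_add_C, natDegree_cyclotomic, mul_one]
  have hprime : Prime (p : ℤ_[p]) := PadicInt.prime_p
  have hEZ : ((cyclotomic (p ^ (k + 1)) ℤ).comp (X + 1)).IsEisensteinAt
      (Submodule.span ℤ {(p : ℤ)}) := cyclotomic_prime_pow_comp_X_add_one_isEisensteinAt p k
  rw [show (X + 1 : ℤ[X]) = X + C 1 by norm_num] at hEZ
  have hE : g.IsEisensteinAt (Ideal.span {(p : ℤ_[p])}) := by
    constructor
    · rw [hgmonic.leadingCoeff, Ideal.mem_span_singleton]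
      exact fun h => hprime.not_unit (isUnit_of_dvd_one h)
    · intro n hn
      rw [hgdeg] at hn
      rw [hmapg, coeff_map, Ideal.mem_span_singleton]
      have := hEZ.mem (n := n) (by rw [hgZdeg]; exact hn)
      rw [Ideal.submodule_span_eq, Ideal.mem_span_singleton] at this
      obtain ⟨c, hc⟩ := this
      exact ⟨(c : ℤ_[p]), by rw [hc]; simp⟩
    · have h0 : g.coeff 0 = (p : ℤ_[p]) := by
        rw [hg, coeff_zero_eq_eval_zero, eval_comp, eval_add, eval_X, eval_C, zero_add,
          eval_one_cyclotomic_prime_pow]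
      rw [h0, Ideal.span_singleton_pow, Ideal.mem_span_singleton]
      intro h
      have : (p : ℤ_[p]) ∣ 1 := by
        have h2 : (p : ℤ_[p]) * (p : ℤ_[p]) ∣ (p : ℤ_[p]) * 1 := by
          rwa [mul_one, ← sq]
        exact (mul_dvd_mul_iff_left hprime.ne_zero).mp h2
      exact hprime.not_unit (isUnit_of_dvd_one this)
  have hirr_g : Irreducible g :=
    hE.irreducible ((Ideal.span_singleton_prime hprime.ne_zero).mpr hprime)
      hgmonic.isPrimitive (by rw [hgdeg]; exact Nat.totient_pos.mpr (pow_pos hp.out.pos _))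
  have : g = (algEquivAevalXAddC (1 : ℤ_[p])) (cyclotomic (p ^ (k + 1)) ℤ_[p]) := by
    simp [hg, algEquivAevalXAddC, algEquivOfCompEqX, aeval_def, eval₂_eq_eval_map, comp]
  rw [this] at hirr_g
  exact (MulEquiv.irreducible_iff _).mp hirr_g

private theorem indep_of_finrank_le' {k V : Type*} [Field k] [AddCommGroup V] [Module k V]
    {ι : Type*} [Fintype ι] (f : ι → Submodule k V)
    (hfd : ∀ i, FiniteDimensional k (f i))
    (hfd2 : FiniteDimensional k ↥(⨆ i, f i))
    (h : ∑ i, Module.finrank k (f i) ≤ Module.finrank k ↥(⨆ i, f i)) :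
    iSupIndep f := by
  classical
  haveI := hfd
  haveI := hfd2
  have hle : ∀ s : Finset ι, s.sup f ≤ ⨆ i, f i := fun s =>
    Finset.sup_le fun i _ => le_iSup f i
  haveI hfds : ∀ s : Finset ι, FiniteDimensional k ↥(s.sup f) := fun s =>
    Submodule.finiteDimensional_of_le (hle s)
  have haux : ∀ s : Finset ι,
      Module.finrank k ↥(s.sup f) ≤ ∑ i ∈ s, Module.finrank k (f i) := by
    intro s
    induction s using Finset.induction with
    | empty => simp
    | @insert a s ha ih =>
      rw [Finset.sup_insert, Finset.sum_insert ha]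
      have h1 := Submodule.finrank_sup_add_finrank_inf_eq (f a) (s.sup f)
      omega
  intro i
  rw [disjoint_iff]
  have hBle : (⨆ j, ⨆ (_ : j ≠ i), f j) ≤ (Finset.univ.erase i).sup f :=
    iSup_le fun j => iSup_le fun hj =>
      Finset.le_sup (Finset.mem_erase.mpr ⟨hj, Finset.mem_univ j⟩)
  have key : f i ⊓ (Finset.univ.erase i).sup f = ⊥ := by
    have h1 := Submodule.finrank_sup_add_finrank_inf_eq (f i) ((Finset.univ.erase i).sup f)
    have h2 : f i ⊔ (Finset.univ.erase i).sup f = ⨆ j, f j := by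
      rw [← Finset.sup_insert, Finset.insert_erase (Finset.mem_univ i),
        Finset.sup_univ_eq_iSup]
    rw [h2] at h1
    have h3 := haux (Finset.univ.erase i)
    have h4 : Module.finrank k (f i) +
        ∑ j ∈ Finset.univ.erase i, Module.finrank k (f j) =
        ∑ j, Module.finrank k (f j) :=
      Finset.add_sum_erase _ (fun j => Module.finrank k ↥(f j)) (Finset.mem_univ i)
    have h5 : Module.finrank k ↥(f i ⊓ (Finset.univ.erase i).sup f) = 0 := by omega
    haveI : FiniteDimensional k ↥(f i ⊓ (Finset.univ.erase i).sup f) :=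
      Submodule.finiteDimensional_of_le inf_le_left
    exact Submodule.finrank_eq_zero.mp h5
  have : f i ⊓ (⨆ j, ⨆ (_ : j ≠ i), f j) ≤ ⊥ := key ▸ inf_le_inf_left _ hBle
  exact le_bot_iff.mp this

end Aux

/-- `ℚ_p(μ_{p^n})` decomposes as the internal direct sum
`⊕_{i=0}^n ℚ_p^{(i)}`, where `ℚ_p^{(i)}` is the `ℚ_p`-span of the Galois conjugates of
`π i` (with `π 0 = 1`, `π 1 = ζ_p + 1/(p-1)`, `π i = ζ_{p^i}` for `i > 1`). -/
theorem cyclotomic_direct_sum_decomposition (p : ℕ) [Fact p.Prime] (hodd : Odd p)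
    (K : Type*) [Field K] [Algebra ℚ_[p] K] [IsAlgClosed K] [Algebra.IsAlgebraic ℚ_[p] K]
    (ζ : ℕ → K)
    (hζ : ∀ n, IsPrimitiveRoot (ζ n) (p ^ n))
    (hcompat : ∀ n, ζ (n + 1) ^ p = ζ n)
    (π : ℕ → K)
    (hπ0 : π 0 = 1)
    (hπ1 : π 1 = ζ 1 + algebraMap ℚ_[p] K ((p - 1 : ℚ_[p])⁻¹))
    (hπ : ∀ n, 1 < n → π n = ζ n)
    (n : ℕ) :
    iSupIndep (fun i : Fin (n + 1) =>
        Submodule.span ℚ_[p] {x : K | ∃ σ : K ≃ₐ[ℚ_[p]] K, x = σ (π i)}) ∧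
    (⨆ i : Fin (n + 1),
        Submodule.span ℚ_[p] {x : K | ∃ σ : K ≃ₐ[ℚ_[p]] K, x = σ (π i)}) =
      Subalgebra.toSubmodule (adjoin ℚ_[p] ({ζ n} : Set K)).toSubalgebra := by
  classical
  have hp : p.Prime := Fact.out
  haveI : IsAlgClosure ℚ_[p] K := ⟨inferInstance, inferInstance⟩
  haveI : Normal ℚ_[p] K := IsAlgClosure.normal ℚ_[p] K
  have hpK : ∀ x : K, IsIntegral ℚ_[p] x := fun x =>
    (Algebra.IsAlgebraic.isAlgebraic x).isIntegral
  have hone : ζ 0 = 1 := by simpa using (hζ 0).pow_eq_one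
  have hζ1 : IsPrimitiveRoot (ζ 1) p := by simpa using hζ 1
  have hζ1p : ζ 1 ^ p = 1 := by simpa using (hζ 1).pow_eq_one
  have hpowc : ∀ m j, ζ (m + j) ^ (p ^ j) = ζ m := by
    intro m j
    induction j with
    | zero => simp
    | succ j ih =>
      rw [show m + (j+1) = (m + j) + 1 by omega, pow_succ', pow_mul, hcompat (m+j), ih]
  -- minimal polynomials
  have hmin' : ∀ (m : ℕ) (w : K), IsPrimitiveRoot w (p ^ (m+1)) →
      minpoly ℚ_[p] w = Polynomial.cyclotomic (p ^ (m+1)) ℚ_[p] := by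
    intro m w hw
    refine (minpoly.eq_of_irreducible_of_monic (cyclo_irr' p m) ?_
      (Polynomial.cyclotomic.monic _ _)).symm
    rw [Polynomial.aeval_def, Polynomial.eval₂_eq_eval_map, Polynomial.map_cyclotomic]
    exact hw.isRoot_cyclotomic (pow_pos hp.pos _)
  -- existence of conjugations
  have hexists : ∀ (m : ℕ) (w : K), IsPrimitiveRoot w (p ^ (m+1)) →
      ∃ σ : K ≃ₐ[ℚ_[p]] K, σ (ζ (m+1)) = w := by
    intro m w hw
    apply minpoly.exists_algEquiv_of_root (Algebra.IsAlgebraic.isAlgebraic w)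
    rw [hmin' m w hw, Polynomial.aeval_def, Polynomial.eval₂_eq_eval_map,
      Polynomial.map_cyclotomic]
    exact (hζ (m+1)).isRoot_cyclotomic (pow_pos hp.pos _)
  -- conjugates are powers
  have hconj : ∀ (m : ℕ) (σ : K ≃ₐ[ℚ_[p]] K), ∃ a, ¬ p ∣ a ∧ σ (ζ (m+1)) = ζ (m+1) ^ a := by
    intro m σ
    have hprim : IsPrimitiveRoot (σ (ζ (m+1))) (p ^ (m+1)) :=
      (hζ (m+1)).map_of_injective σ.injective
    haveI : NeZero (p ^ (m+1)) := ⟨pow_ne_zero _ hp.ne_zero⟩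
    obtain ⟨a, _, haeq⟩ := (hζ (m+1)).eq_pow_of_pow_eq_one hprim.pow_eq_one
    refine ⟨a, ?_, haeq.symm⟩
    rintro ⟨b, rfl⟩
    have h1 : (σ (ζ (m+1))) ^ (p ^ m) = 1 := by
      rw [← haeq, ← pow_mul, show p * b * p ^ m = (p ^ (m+1)) * b by ring, pow_mul,
        (hζ (m+1)).pow_eq_one, one_pow]
    have h2 := hprim.dvd_of_pow_eq_one _ h1
    have h3 := Nat.le_of_dvd (pow_pos hp.pos m) h2
    have h4 : p ^ m < p ^ (m+1) := Nat.pow_lt_pow_succ hp.one_lt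
    omega
  set c : K := algebraMap ℚ_[p] K ((p - 1 : ℚ_[p])⁻¹) with hc
  set W : ℕ → Submodule ℚ_[p] K :=
    fun i => Submodule.span ℚ_[p] {x : K | ∃ σ : K ≃ₐ[ℚ_[p]] K, x = σ (π i)} with hW
  have hWmem : ∀ (i : ℕ) (σ : K ≃ₐ[ℚ_[p]] K), σ (π i) ∈ W i := fun i σ =>
    Submodule.subset_span ⟨σ, rfl⟩
  have h1W : (1 : K) ∈ W 0 := by
    have := hWmem 0 AlgEquiv.refl
    simpa [hπ0] using this
  set M : Submodule ℚ_[p] K :=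
    Subalgebra.toSubmodule (adjoin ℚ_[p] ({ζ n} : Set K)).toSubalgebra with hM
  have hmemM : ∀ x : K, x ∈ M ↔ x ∈ adjoin ℚ_[p] ({ζ n} : Set K) := fun x => Iff.rfl
  have hζnA : ζ n ∈ adjoin ℚ_[p] ({ζ n} : Set K) := subset_adjoin _ _ (Set.mem_singleton _)
  have hζmem : ∀ m, m ≤ n → ∀ a, ζ m ^ a ∈ adjoin ℚ_[p] ({ζ n} : Set K) := by
    intro m hm a
    cases m with
    | zero => rw [hone, one_pow]; exact one_mem _
    | succ m =>
      have h1 : ζ (m+1) = ζ n ^ (p ^ (n - (m+1))) := by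
        have := hpowc (m+1) (n - (m+1))
        rw [show (m+1) + (n - (m+1)) = n from by omega] at this
        exact this.symm
      rw [h1, ← pow_mul]
      exact pow_mem hζnA _
  have hsup_le : (⨆ i : Fin (n+1), W i) ≤ M := by
    refine iSup_le fun i => ?_
    refine Submodule.span_le.mpr ?_
    rintro x ⟨σ, rfl⟩
    rw [SetLike.mem_coe, hmemM]
    obtain ⟨iv, hiv⟩ := i
    simp only []
    cases iv with
    | zero => rw [hπ0, map_one]; exact one_mem _
    | succ m =>
      obtain ⟨a, _, hσa⟩ := hconj m σ
      have hzm : ζ (m+1) ^ a ∈ adjoin ℚ_[p] ({ζ n} : Set K) := hζmem (m+1) (by omega) a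
      cases m with
      | zero =>
        rw [hπ1, map_add, AlgEquiv.commutes, hσa]
        exact add_mem hzm (IntermediateField.algebraMap_mem _ _)
      | succ m' =>
        rw [hπ _ (by omega), hσa]
        exact hzm
  have hkey : ∀ m, m ≤ n → ∀ a : ℕ, ζ m ^ a ∈ (⨆ i : Fin (n+1), W i) := by
    intro m
    induction m with
    | zero =>
      intro _ a
      rw [hone, one_pow]
      exact Submodule.mem_iSup_of_mem ⟨0, by omega⟩ h1W
    | succ m ih =>
      intro hm a
      by_cases hpa : p ∣ a
      · obtain ⟨b, rfl⟩ := hpa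
        rw [pow_mul, hcompat m]
        exact ih (by omega) b
      · have hcop : a.Coprime (p ^ (m+1)) :=
          Nat.Coprime.pow_right _ (Nat.coprime_comm.mp (hp.coprime_iff_not_dvd.mpr hpa))
        obtain ⟨σ, hσ⟩ := hexists m (ζ (m+1) ^ a) ((hζ (m+1)).pow_of_coprime a hcop)
        cases m with
        | zero =>
          have hx : ζ 1 ^ a = σ (π 1) - ((p - 1 : ℚ_[p])⁻¹) • (1 : K) := by
            rw [hπ1, map_add, AlgEquiv.commutes, hσ, ← Algebra.algebraMap_eq_smul_one]
            abel
          rw [hx]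
          exact Submodule.sub_mem _
            (Submodule.mem_iSup_of_mem ⟨1, by omega⟩ (hWmem 1 σ))
            (Submodule.smul_mem _ _ (Submodule.mem_iSup_of_mem ⟨0, by omega⟩ h1W))
        | succ m' =>
          have hx : ζ (m'+2) ^ a = σ (π (m'+2)) := by rw [hπ _ (by omega), hσ]
          rw [hx]
          exact Submodule.mem_iSup_of_mem ⟨m'+2, by omega⟩ (hWmem _ σ)
  have hM_le : M ≤ ⨆ i : Fin (n+1), W i := by
    intro x hx
    rw [hmemM] at hx
    have hx' : x ∈ Algebra.adjoin ℚ_[p] ({ζ n} : Set K) := by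
      rw [← IntermediateField.adjoin_toSubalgebra_of_isAlgebraic
        (fun y _ => Algebra.IsAlgebraic.isAlgebraic y)]
      exact hx
    rw [Algebra.adjoin_singleton_eq_range_aeval] at hx'
    obtain ⟨f, hf⟩ := hx'
    have hf' : (Polynomial.aeval (ζ n)) f = x := hf
    rw [← hf', Polynomial.aeval_eq_sum_range]
    exact Submodule.sum_mem _ fun i _ => Submodule.smul_mem _ _ (hkey n le_rfl i)
  have hsup : (⨆ i : Fin (n+1), W i) = M := le_antisymm hsup_le hM_le
  -- finite dimensionality and rank of M
  haveI hMfd : FiniteDimensional ℚ_[p] M := by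
    have := IntermediateField.adjoin.finiteDimensional (hpK (ζ n))
    exact this
  have hdeg : (minpoly ℚ_[p] (ζ n)).natDegree = (p ^ n).totient := by
    cases n with
    | zero =>
      rw [hone, minpoly.one, ← Polynomial.C_1, Polynomial.natDegree_X_sub_C, pow_zero, Nat.totient_one]
    | succ m =>
      rw [hmin' m (ζ (m+1)) (hζ (m+1)), Polynomial.natDegree_cyclotomic]
  have hMrank : Module.finrank ℚ_[p] M = (p ^ n).totient := by
    rw [← hdeg, ← IntermediateField.adjoin.finrank (hpK (ζ n))]
    rfl
  haveI hWfd : ∀ i : Fin (n+1), FiniteDimensional ℚ_[p] (W i) := fun i =>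
    Submodule.finiteDimensional_of_le (le_trans (le_iSup (fun j : Fin (n+1) => W j) i) hsup.le)
  -- rank bounds
  have hW0 : Module.finrank ℚ_[p] (W 0) ≤ 1 := by
    have hsub : W 0 ≤ Submodule.span ℚ_[p] ((({1} : Finset K) : Set K)) := by
      refine Submodule.span_le.mpr ?_
      rintro x ⟨σ, rfl⟩
      rw [hπ0, map_one]
      exact Submodule.subset_span (by simp)
    haveI := FiniteDimensional.span_of_finite ℚ_[p] (({1} : Finset K)).finite_toSet
    calc Module.finrank ℚ_[p] (W 0)
        ≤ Module.finrank ℚ_[p] (Submodule.span ℚ_[p] ((({1} : Finset K) : Set K))) :=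
          Submodule.finrank_mono hsub
      _ ≤ ({1} : Finset K).card := finrank_span_finset_le_card _
      _ ≤ 1 := by simp
  have hpQne : ((p : ℚ_[p]) - 1) ≠ 0 := by
    rw [sub_ne_zero]
    intro h
    have : ((p : ℕ) : ℚ_[p]) = ((1 : ℕ) : ℚ_[p]) := by rw [h]; norm_num
    have h2 := Nat.cast_injective (R := ℚ_[p]) this
    have := hp.one_lt
    omega
  have hcsum : (p - 1 : ℕ) • c = 1 := by
    rw [hc, ← map_nsmul, nsmul_eq_mul, Nat.cast_sub hp.one_le, Nat.cast_one,
      mul_inv_cancel₀ hpQne, map_one]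
  have hW1 : Module.finrank ℚ_[p] (W 1) ≤ p - 2 := by
    set T : Finset K := (Finset.Icc 1 (p-2)).image (fun a => ζ 1 ^ a + c) with hT
    have hsub : W 1 ≤ Submodule.span ℚ_[p] (T : Set K) := by
      refine Submodule.span_le.mpr ?_
      rintro x ⟨σ, rfl⟩
      obtain ⟨a, hpa, hσa⟩ := hconj 0 σ
      have hx : σ (π 1) = ζ 1 ^ (a % p) + c := by
        rw [hπ1, map_add, AlgEquiv.commutes, hσa, pow_mod_eq' hζ1p]
      have hmod : a % p ≠ 0 := fun h => hpa (Nat.dvd_of_mod_eq_zero h)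
      have hlt : a % p < p := Nat.mod_lt _ hp.pos
      by_cases hle : a % p ≤ p - 2
      · apply Submodule.subset_span
        rw [hx]
        exact Finset.mem_coe.mpr (Finset.mem_image.mpr
          ⟨a % p, Finset.mem_Icc.mpr ⟨by omega, hle⟩, rfl⟩)
      · have hap : a % p = p - 1 := by omega
        have hrel : ∑ b ∈ Finset.Icc 1 (p-1), (ζ 1 ^ b + c) = 0 := by
          rw [Finset.sum_add_distrib, Finset.sum_const, Nat.card_Icc]
          have h2 : ∑ b ∈ Finset.range p, ζ 1 ^ b = 0 := hζ1.geom_sum_eq_zero hp.one_lt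
          have h3 : Finset.range p = insert 0 (Finset.Icc 1 (p-1)) := by
            ext y
            simp only [Finset.mem_range, Finset.mem_insert, Finset.mem_Icc]
            omega
          rw [h3, Finset.sum_insert (by simp)] at h2
          have h4 : ∑ b ∈ Finset.Icc 1 (p-1), ζ 1 ^ b = -1 := by
            rw [pow_zero] at h2
            linear_combination h2
          rw [h4, show p - 1 + 1 - 1 = p - 1 from by omega, hcsum]
          abel
        have hsplit : Finset.Icc 1 (p-1) = insert (p-1) (Finset.Icc 1 (p-2)) := by
          ext y
          simp only [Finset.mem_insert, Finset.mem_Icc]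
          omega
        rw [hsplit, Finset.sum_insert (by simp only [Finset.mem_Icc]; omega)] at hrel
        have hfin : ζ 1 ^ (p-1) + c = -∑ b ∈ Finset.Icc 1 (p-2), (ζ 1 ^ b + c) :=
          eq_neg_of_add_eq_zero_left hrel
        rw [hx, hap, hfin]
        exact Submodule.neg_mem _ (Submodule.sum_mem _ fun b hb =>
          Submodule.subset_span (Finset.mem_coe.mpr (Finset.mem_image.mpr ⟨b, hb, rfl⟩)))
    haveI := FiniteDimensional.span_of_finite ℚ_[p] T.finite_toSet
    calc Module.finrank ℚ_[p] (W 1)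
        ≤ Module.finrank ℚ_[p] (Submodule.span ℚ_[p] (T : Set K)) :=
          Submodule.finrank_mono hsub
      _ ≤ T.card := finrank_span_finset_le_card _
      _ ≤ (Finset.Icc 1 (p-2)).card := Finset.card_image_le
      _ = p - 2 := by rw [Nat.card_Icc]; omega
  have hWm : ∀ m : ℕ, Module.finrank ℚ_[p] (W (m+2)) ≤
      (p ^ (m+2)).totient - (p ^ (m+1)).totient := by
    intro m
    set Q := p ^ (m+1) with hQ
    have hQpos : 0 < Q := pow_pos hp.pos _
    set T : Finset K := (((Finset.range Q).filter (fun b => ¬ p ∣ b)) ×ˢ Finset.range (p-1)).image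
      (fun bk => ζ (m+2) ^ (bk.1 + Q * bk.2)) with hT
    have hζQ : ζ (m+2) ^ Q = ζ 1 := by
      have := hpowc 1 (m+1)
      rwa [show 1 + (m+1) = m + 2 from by omega] at this
    have hred2 : ∀ b k : ℕ, ζ (m+2) ^ (b + Q * k) = ζ (m+2) ^ b * ζ 1 ^ k := fun b k => by
      rw [pow_add, pow_mul, hζQ]
    have hsub : W (m+2) ≤ Submodule.span ℚ_[p] (T : Set K) := by
      refine Submodule.span_le.mpr ?_
      rintro x ⟨σ, rfl⟩
      obtain ⟨a, hpa, hσa⟩ := hconj (m+1) σ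
      rw [hπ (m+2) (by omega), hσa]
      set b := a % Q with hb
      set j := (a / Q) % p with hj
      have hred : ζ (m+2) ^ a = ζ (m+2) ^ (b + Q * j) := by
        conv_lhs => rw [← Nat.div_add_mod a Q]
        rw [pow_add, pow_mul, hζQ, hred2, pow_mod_eq' hζ1p (a / Q), mul_comm]
      have hpb : ¬ p ∣ b := by
        intro hdvd
        apply hpa
        have h1 : p ∣ Q * (a / Q) := Dvd.dvd.mul_right
          (dvd_pow_self p (Nat.succ_ne_zero m)) _
        have h2 := Nat.dvd_add h1 hdvd
        rwa [Nat.div_add_mod] at h2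
      have hblt : b < Q := Nat.mod_lt _ hQpos
      have hbmem : b ∈ (Finset.range Q).filter (fun b => ¬ p ∣ b) :=
        Finset.mem_filter.mpr ⟨Finset.mem_range.mpr hblt, hpb⟩
      have hjlt : j < p := Nat.mod_lt _ hp.pos
      by_cases hjle : j < p - 1
      · apply Submodule.subset_span
        refine Finset.mem_coe.mpr (Finset.mem_image.mpr
          ⟨(b, j), Finset.mem_product.mpr ⟨hbmem, Finset.mem_range.mpr hjle⟩, ?_⟩)
        rw [hred]
      · have hjeq : j = p - 1 := by omega
        have hrelb : (∑ k ∈ Finset.range (p-1), ζ (m+2) ^ (b + Q * k)) +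
            ζ (m+2) ^ (b + Q * (p-1)) = 0 := by
          have h0 : ∑ k ∈ Finset.range p, ζ (m+2) ^ (b + Q * k) = 0 := by
            rw [Finset.sum_congr rfl (fun k _ => hred2 b k), ← Finset.mul_sum,
              hζ1.geom_sum_eq_zero hp.one_lt, mul_zero]
          rwa [show p = (p-1)+1 from by omega, Finset.sum_range_succ] at h0
        have hxeq : ζ (m+2) ^ a = -∑ k ∈ Finset.range (p-1), ζ (m+2) ^ (b + Q * k) := by
          rw [hred, hjeq]
          exact eq_neg_of_add_eq_zero_right hrelb
        rw [hxeq]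
        exact Submodule.neg_mem _ (Submodule.sum_mem _ fun k hk =>
          Submodule.subset_span (Finset.mem_coe.mpr (Finset.mem_image.mpr
            ⟨(b, k), Finset.mem_product.mpr ⟨hbmem, hk⟩, rfl⟩)))
    haveI := FiniteDimensional.span_of_finite ℚ_[p] T.finite_toSet
    have hcardfilter : ((Finset.range Q).filter (fun b => ¬ p ∣ b)).card = Q.totient := by
      simp only [Nat.totient]
      congr 1
      ext y
      simp only [Finset.mem_filter, Finset.mem_range]
      exact and_congr_right fun _ => by
        rw [hQ, Nat.coprime_pow_left_iff (Nat.succ_pos m), hp.coprime_iff_not_dvd]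
    have harith : Q.totient * (p - 1) = (p ^ (m+2)).totient - (p ^ (m+1)).totient := by
      symm
      apply Nat.sub_eq_of_eq_add
      rw [hQ, Nat.totient_prime_pow hp (Nat.succ_pos _), Nat.totient_prime_pow hp (Nat.succ_pos _)]
      have h2p := hp.two_le
      rw [show m + 2 - 1 = m + 1 from rfl, show m + 1 - 1 = m from rfl, pow_succ]
      generalize hqe : p - 1 = q
      rw [show p = q + 1 from by omega]
      ring
    calc Module.finrank ℚ_[p] (W (m+2))
        ≤ Module.finrank ℚ_[p] (Submodule.span ℚ_[p] (T : Set K)) :=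
          Submodule.finrank_mono hsub
      _ ≤ T.card := finrank_span_finset_le_card _
      _ ≤ (((Finset.range Q).filter (fun b => ¬ p ∣ b)) ×ˢ Finset.range (p-1)).card :=
          Finset.card_image_le
      _ = Q.totient * (p - 1) := by rw [Finset.card_product, Finset.card_range, hcardfilter]
      _ = (p ^ (m+2)).totient - (p ^ (m+1)).totient := harith
  have htot_mono : ∀ i : ℕ, (p ^ i).totient ≤ (p ^ (i+1)).totient := fun i =>
    Nat.le_of_dvd (Nat.totient_pos.mpr (pow_pos hp.pos _))
      (Nat.totient_dvd_of_dvd (pow_dvd_pow p (Nat.le_succ i)))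
  have hsumN : ∀ N : ℕ, ∑ i ∈ Finset.range (N+1), Module.finrank ℚ_[p] (W i) ≤
      (p ^ N).totient := by
    intro N
    induction N with
    | zero => simpa using hW0
    | succ N ih =>
      rw [Finset.sum_range_succ]
      have hb : Module.finrank ℚ_[p] (W (N+1)) ≤ (p ^ (N+1)).totient - (p ^ N).totient := by
        cases N with
        | zero =>
          have : (p ^ 1).totient - (p ^ 0).totient = p - 2 := by
            rw [pow_one, pow_zero, Nat.totient_one, Nat.totient_prime hp]
            omega
          rw [this]
          exact hW1
        | succ N' => exact hWm N'
      have := htot_mono N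
      omega
  have hsumFin : ∑ i : Fin (n+1), Module.finrank ℚ_[p] (W i) ≤
      Module.finrank ℚ_[p] ↥(⨆ i : Fin (n+1), W i) := by
    rw [hsup, hMrank]
    rw [Fin.sum_univ_eq_sum_range (fun i => Module.finrank ℚ_[p] (W i)) (n+1)]
    exact hsumN n
  haveI hsupfd : FiniteDimensional ℚ_[p] ↥(⨆ i : Fin (n+1), W i) := hsup ▸ hMfd
  exact ⟨indep_of_finrank_le' (fun i : Fin (n+1) => W i) hWfd hsupfd hsumFin, hsup⟩
end

section
/- Let p be an odd prime, n ≥ 0, and α = Σ_{i=0}^n x_i π_i with x_i ∈ ℚ_p. Then the ℚ_p-vector space generated by the Galois conjugates {α^σ : σ ∈ Gal(ℚ_p(μ_{p^n})/ℚ_p)} equals ⊕_{i ∈ S} ℚ_p^{(i)}, where S = {i : x_i ≠ 0}. -/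
open IntermediateField

open Polynomial

lemma my_padic_cyclotomic_irreducible (p : ℕ) [hp : Fact p.Prime] (n : ℕ) :
    Irreducible (cyclotomic (p ^ n) ℚ_[p]) := by
  rcases n with _ | m
  · simpa [cyclotomic_one] using irreducible_X_sub_C (1 : ℚ_[p])
  -- the shifted polynomial over ℤ_[p]
  set h : ℤ_[p][X] := (cyclotomic (p ^ (m + 1)) ℤ_[p]).comp (X + C 1) with hh
  have hmap : h = Polynomial.map (Int.castRingHom ℤ_[p])
      ((cyclotomic (p ^ (m + 1)) ℤ).comp (X + C 1)) := by
    rw [Polynomial.map_comp, map_cyclotomic, Polynomial.map_add, Polynomial.map_X,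
      Polynomial.map_C, map_one]
  have hmonic : h.Monic := by
    refine (cyclotomic.monic _ _).comp (monic_X_add_C 1) ?_
    rw [natDegree_X_add_C]; exact one_ne_zero
  have hdeg : h.natDegree = (p ^ (m + 1)).totient := by
    rw [hh, natDegree_comp, natDegree_X_add_C, mul_one, natDegree_cyclotomic]
  have hdegZ : ((cyclotomic (p ^ (m + 1)) ℤ).comp (X + C 1)).natDegree
      = (p ^ (m + 1)).totient := by
    rw [natDegree_comp, natDegree_X_add_C, mul_one, natDegree_cyclotomic]
  have hEZ := cyclotomic_prime_pow_comp_X_add_one_isEisensteinAt p m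
  have hppos : (0:ℤ_[p]) ≠ (p : ℤ_[p]) := (PadicInt.prime_p (p := p)).ne_zero.symm
  have hE : h.IsEisensteinAt (Ideal.span {(p : ℤ_[p])}) := by
    constructor
    · rw [hmonic.leadingCoeff]
      rw [Ideal.mem_span_singleton]
      intro hdvd
      exact (PadicInt.prime_p (p := p)).not_unit (isUnit_of_dvd_one hdvd)
    · intro i hi
      rw [hmap, coeff_map]
      have hXC : (X + 1 : ℤ[X]) = X + C 1 := by simp
      have hi' : i < ((cyclotomic (p ^ (m + 1)) ℤ).comp (X + 1)).natDegree := by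
        rw [hXC, hdegZ]; rw [hdeg] at hi; exact hi
      have hmem := hEZ.mem hi'
      rw [Ideal.submodule_span_eq, Ideal.mem_span_singleton] at hmem
      rw [Ideal.mem_span_singleton]
      obtain ⟨c, hc⟩ := hmem
      rw [hXC] at hc
      exact ⟨(c : ℤ_[p]), by rw [hc]; simp⟩
    · have hc0 : h.coeff 0 = (p : ℤ_[p]) := by
        rw [coeff_zero_eq_eval_zero, hh, eval_comp]
        simp only [eval_add, eval_X, eval_C, zero_add]
        exact eval_one_cyclotomic_prime_pow m
      rw [hc0, Ideal.span_singleton_pow, Ideal.mem_span_singleton]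
      rintro ⟨z, hz⟩
      have : (1 : ℤ_[p]) = p * z := by
        have hp0 : (p : ℤ_[p]) ≠ 0 := hppos.symm
        rw [pow_two, mul_assoc] at hz
        exact mul_left_cancel₀ hp0 (by rw [mul_one, ← hz])
      exact (PadicInt.prime_p (p := p)).not_isUnit (IsUnit.of_mul_eq_one _ this.symm)
  have hirrZ : Irreducible h := by
    refine hE.irreducible ?_ hmonic.isPrimitive ?_
    · exact (Ideal.span_singleton_prime hppos.symm).2 PadicInt.prime_p
    · rw [hdeg]; exact Nat.totient_pos.2 (pow_pos hp.out.pos _)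
  have hirrQ : Irreducible (h.map (algebraMap ℤ_[p] ℚ_[p])) :=
    (hmonic.irreducible_iff_irreducible_map_fraction_map (K := ℚ_[p])).1 hirrZ
  have hmapQ : h.map (algebraMap ℤ_[p] ℚ_[p])
      = (cyclotomic (p ^ (m + 1)) ℚ_[p]).comp (X + C 1) := by
    rw [hh, Polynomial.map_comp, map_cyclotomic, Polynomial.map_add, Polynomial.map_X,
      Polynomial.map_C, map_one]
  rw [hmapQ] at hirrQ
  have hkey : (algEquivAevalXAddC (1 : ℚ_[p])) (cyclotomic (p ^ (m + 1)) ℚ_[p])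
      = (cyclotomic (p ^ (m + 1)) ℚ_[p]).comp (X + C 1) := by
    rw [algEquivAevalXAddC_apply, aeval_def, Polynomial.algebraMap_eq]
    rfl
  exact (MulEquiv.irreducible_iff (algEquivAevalXAddC (1 : ℚ_[p]))).1 (hkey ▸ hirrQ)

lemma my_sum_pow_eq_zero {K : Type*} [Field K] {z : K} (hz : z ≠ 1) {M : ℕ}
    (hM : z ^ M = 1) : ∑ t ∈ Finset.range M, z ^ t = 0 := by
  have h := geom_sum_mul z M
  rw [hM, sub_self] at h
  rcases mul_eq_zero.1 h with h' | h'
  · exact h'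
  · exact absurd (sub_eq_zero.1 h') hz

lemma my_exists_conj (p : ℕ) [hp : Fact p.Prime] {K : Type*} [Field K] [Algebra ℚ_[p] K]
    [IsAlgClosed K] [Algebra.IsAlgebraic ℚ_[p] K] {z : K} {n : ℕ}
    (hz : IsPrimitiveRoot z (p ^ n)) {m : ℕ} (hm : ¬ p ∣ m) :
    ∃ σ : K ≃ₐ[ℚ_[p]] K, σ z = z ^ m := by
  haveI : IsAlgClosure ℚ_[p] K := ⟨inferInstance, inferInstance⟩
  haveI : Normal ℚ_[p] K := inferInstance
  haveI : NeZero ((p ^ n : ℕ) : ℚ_[p]) :=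
    ⟨Nat.cast_ne_zero.2 (pow_ne_zero _ hp.out.ne_zero)⟩
  haveI : CharZero K := charZero_of_injective_algebraMap (algebraMap ℚ_[p] K).injective
  haveI : NeZero ((p ^ n : ℕ) : K) :=
    ⟨Nat.cast_ne_zero.2 (pow_ne_zero _ hp.out.ne_zero)⟩
  have hpos : 0 < p ^ n := pow_pos hp.out.pos _
  have hcop : (m).Coprime (p ^ n) :=
    Nat.Coprime.pow_right _ ((Nat.Prime.coprime_iff_not_dvd hp.out).2 hm).symm
  have hzm : IsPrimitiveRoot (z ^ m) (p ^ n) := hz.pow_of_coprime m hcop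
  have hminp : minpoly ℚ_[p] z = Polynomial.cyclotomic (p ^ n) ℚ_[p] :=
    (hz.minpoly_eq_cyclotomic_of_irreducible (my_padic_cyclotomic_irreducible p n)).symm
  have hev : (Polynomial.aeval (z ^ m)) (minpoly ℚ_[p] z) = 0 := by
    rw [hminp, Polynomial.aeval_def, Polynomial.eval₂_eq_eval_map, Polynomial.map_cyclotomic]
    exact (Polynomial.isRoot_cyclotomic_iff.2 hzm)
  exact minpoly.exists_algEquiv_of_root' (Algebra.IsAlgebraic.isAlgebraic z) hev


/-- For `α = Σ_{i=0}^n x_i π_i` with `x_i ∈ ℚ_p`, the `ℚ_p`-span of the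
Galois conjugates of `α` equals `⊕_{i ∈ S} ℚ_p^{(i)}` where `S = {i : x_i ≠ 0}` and
`ℚ_p^{(i)}` is the `ℚ_p`-span of the Galois conjugates of `π i`. -/
theorem span_conjugates_of_combination (p : ℕ) [Fact p.Prime] (hodd : Odd p)
    (K : Type*) [Field K] [Algebra ℚ_[p] K] [IsAlgClosed K] [Algebra.IsAlgebraic ℚ_[p] K]
    (ζ : ℕ → K)
    (hζ : ∀ n, IsPrimitiveRoot (ζ n) (p ^ n))
    (hcompat : ∀ n, ζ (n + 1) ^ p = ζ n)
    (π : ℕ → K)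
    (hπ0 : π 0 = 1)
    (hπ1 : π 1 = ζ 1 + algebraMap ℚ_[p] K ((p - 1 : ℚ_[p])⁻¹))
    (hπ : ∀ n, 1 < n → π n = ζ n)
    (n : ℕ) (x : ℕ → ℚ_[p])
    (α : K) (hα : α = ∑ i ∈ Finset.range (n + 1), x i • π i) :
    Submodule.span ℚ_[p] {y : K | ∃ σ : K ≃ₐ[ℚ_[p]] K, y = σ α} =
      ⨆ i ∈ Finset.range (n + 1), ⨆ _ : x i ≠ 0,
        Submodule.span ℚ_[p] {y : K | ∃ σ : K ≃ₐ[ℚ_[p]] K, y = σ (π i)} := by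
  classical
  have hp' : p.Prime := Fact.out
  have hp2 : 2 ≤ p := hp'.two_le
  -- compatibility chain
  have hchain : ∀ k j : ℕ, ζ j = ζ (j + k) ^ p ^ k := by
    intro k
    induction k with
    | zero => intro j; simp
    | succ k ih =>
      intro j
      calc ζ j = ζ (j + k) ^ p ^ k := ih j
        _ = (ζ (j + k + 1) ^ p) ^ p ^ k := by rw [hcompat (j + k)]
        _ = ζ (j + (k + 1)) ^ p ^ (k + 1) := by
            rw [← pow_mul, ← pow_succ']
            congr 1
  have hpow : ∀ i, i ≤ n → ζ i = ζ n ^ p ^ (n - i) := by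
    intro i hi
    have := hchain (n - i) i
    rwa [Nat.add_sub_cancel' hi] at this
  have hζone : ∀ i, 1 ≤ i → ζ i ≠ 1 := fun i hi =>
    (hζ i).ne_one (Nat.one_lt_pow (by omega) hp2)
  -- choice of automorphisms
  have hex : ∀ m : ℕ, ¬ p ∣ m → ∃ σ : K ≃ₐ[ℚ_[p]] K, σ (ζ n) = ζ n ^ m :=
    fun m hm => my_exists_conj p (hζ n) hm
  set F : ℕ → (K ≃ₐ[ℚ_[p]] K) :=
    fun m => if h : ¬ p ∣ m then (hex m h).choose else AlgEquiv.refl with hFdef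
  have hF : ∀ m, ¬ p ∣ m → F m (ζ n) = ζ n ^ m := by
    intro m hm
    simp only [hFdef, dif_pos hm]
    exact (hex m hm).choose_spec
  have hFζ : ∀ m, ¬ p ∣ m → ∀ i, i ≤ n → F m (ζ i) = ζ i ^ m := by
    intro m hm i hi
    rw [hpow i hi, map_pow, hF m hm, ← pow_mul, mul_comm, pow_mul]
  -- the span of conjugates of α
  set M : Submodule ℚ_[p] K :=
    Submodule.span ℚ_[p] {y : K | ∃ σ : K ≃ₐ[ℚ_[p]] K, y = σ α} with hMdef
  have hmemM : ∀ σ : K ≃ₐ[ℚ_[p]] K, σ α ∈ M := fun σ =>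
    Submodule.subset_span ⟨σ, rfl⟩
  have hαM : α ∈ M := by
    have := hmemM AlgEquiv.refl
    simpa using this
  have hstab : ∀ (τ : K ≃ₐ[ℚ_[p]] K), ∀ y ∈ M, τ y ∈ M := by
    intro τ y hy
    induction hy using Submodule.span_induction with
    | mem z hz =>
      obtain ⟨σ, rfl⟩ := hz
      exact Submodule.subset_span ⟨σ.trans τ, rfl⟩
    | zero => simpa using M.zero_mem
    | add a b _ _ ha hb => rw [map_add]; exact M.add_mem ha hb
    | smul c a _ h => rw [map_smul]; exact M.smul_mem c h
  -- key sums of powers of roots of unity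
  have hsum0 : ∀ i, 1 ≤ i → i ≤ n → ∀ j, 1 ≤ j → j ≤ n →
      ∑ t ∈ Finset.range (p ^ (n - j)), ζ i ^ (1 + p ^ j * t)
        = if i ≤ j then (p : K) ^ (n - j) * ζ i else 0 := by
    intro i hi1 hin j hj1 hjn
    have hsplit : ∀ t, ζ i ^ (1 + p ^ j * t) = ζ i * (ζ i ^ p ^ j) ^ t := by
      intro t; rw [pow_add, pow_one, pow_mul]
    simp only [hsplit, ← Finset.mul_sum]
    by_cases hij : i ≤ j
    · rw [if_pos hij]
      have h1 : ζ i ^ p ^ j = 1 := by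
        have he : p ^ j = p ^ i * p ^ (j - i) := by
          rw [← pow_add, Nat.add_sub_cancel' hij]
        rw [he, pow_mul, (hζ i).pow_eq_one, one_pow]
      rw [h1]
      simp only [one_pow, Finset.sum_const, Finset.card_range, nsmul_eq_mul, mul_one,
        Nat.cast_pow]
      ring
    · rw [if_neg hij]
      push_neg at hij
      have hw : ζ i ^ p ^ j = ζ (i - j) := by
        rw [hpow i hin, ← pow_mul, ← pow_add, hpow (i - j) (le_trans (Nat.sub_le _ _) hin)]
        congr 2
        omega
      have hw1 : ζ (i - j) ≠ 1 := hζone _ (by omega)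
      have hwM : ζ (i - j) ^ p ^ (n - j) = 1 := by
        have he : p ^ (n - j) = p ^ (i - j) * p ^ (n - i) := by
          rw [← pow_add]; congr 1; omega
        rw [he, pow_mul, (hζ (i - j)).pow_eq_one, one_pow]
      rw [hw, my_sum_pow_eq_zero hw1 hwM, mul_zero]
  -- exponents 1 + p^j t are coprime to p
  have hnd : ∀ j, 1 ≤ j → ∀ t : ℕ, ¬ p ∣ (1 + p ^ j * t) := by
    intro j hj t hdvd
    have h1 : p ∣ p ^ j * t := dvd_mul_of_dvd_left (dvd_pow_self p (by omega)) t
    rw [add_comm] at hdvd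
    have h2 : p ∣ 1 := (Nat.dvd_add_right h1).1 hdvd
    have := Nat.le_of_dvd one_pos h2
    omega
  -- core computation
  have hcore : ∀ j, 1 ≤ j → j ≤ n → ∀ i, i ≤ n →
      ∑ t ∈ Finset.range (p ^ (n - j)), F (1 + p ^ j * t) (π i)
        = if i ≤ j then (p : K) ^ (n - j) * π i else 0 := by
    intro j hj1 hjn i hin
    rcases Nat.lt_or_ge i 2 with hi2 | hi2
    · interval_cases i
      · rw [if_pos (by omega)]
        simp only [hπ0, map_one, Finset.sum_const, Finset.card_range, nsmul_eq_mul, mul_one,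
          Nat.cast_pow]
      · rw [if_pos hj1]
        have : ∀ t : K ≃ₐ[ℚ_[p]] K, t (π 1) = t (ζ 1) + algebraMap ℚ_[p] K ((p - 1 : ℚ_[p])⁻¹) := by
          intro t
          rw [hπ1, map_add, AlgEquiv.commutes]
        simp only [this]
        rw [Finset.sum_add_distrib]
        have hz : ∀ t ∈ Finset.range (p ^ (n - j)),
            F (1 + p ^ j * t) (ζ 1) = ζ 1 ^ (1 + p ^ j * t) := fun t _ =>
          hFζ _ (hnd j hj1 t) 1 (by omega)
        rw [Finset.sum_congr rfl hz, hsum0 1 le_rfl (by omega) j hj1 hjn, if_pos hj1]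
        rw [Finset.sum_const, Finset.card_range, hπ1]
        rw [nsmul_eq_mul, mul_add, Nat.cast_pow]
    · rw [hπ i (by omega)]
      have hz : ∀ t ∈ Finset.range (p ^ (n - j)),
          F (1 + p ^ j * t) (ζ i) = ζ i ^ (1 + p ^ j * t) := fun t _ =>
        hFζ _ (hnd j hj1 t) i hin
      rw [Finset.sum_congr rfl hz, hsum0 i (by omega) hin j hj1 hjn]
  -- partial sums are in M
  have hDmem : ∀ j, 1 ≤ j → j ≤ n → (∑ i ∈ Finset.range (j + 1), x i • π i) ∈ M := by
    intro j hj1 hjn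
    have hsummem : (∑ t ∈ Finset.range (p ^ (n - j)), F (1 + p ^ j * t) α) ∈ M :=
      Submodule.sum_mem _ fun t _ => hmemM _
    have hval : (∑ t ∈ Finset.range (p ^ (n - j)), F (1 + p ^ j * t) α)
        = ((p : ℚ_[p]) ^ (n - j)) • ∑ i ∈ Finset.range (j + 1), x i • π i := by
      simp only [hα, map_sum, map_smul]
      rw [Finset.sum_comm]
      have hstep : ∀ i ∈ Finset.range (n + 1),
          (∑ t ∈ Finset.range (p ^ (n - j)), x i • F (1 + p ^ j * t) (π i))
            = if i ≤ j then x i • ((p : K) ^ (n - j) * π i) else 0 := by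
        intro i hi
        rw [← Finset.smul_sum, hcore j hj1 hjn i (Finset.mem_range_succ_iff.1 hi)]
        by_cases hij : i ≤ j
        · rw [if_pos hij, if_pos hij]
        · rw [if_neg hij, if_neg hij, smul_zero]
      rw [Finset.sum_congr rfl hstep]
      rw [← Finset.sum_subset
        (Finset.range_subset_range.2 (by omega) : Finset.range (j + 1) ⊆ Finset.range (n + 1))
        (fun i _ hi => by
          rw [if_neg (fun h => hi (Finset.mem_range_succ_iff.2 h))])]
      rw [Finset.smul_sum]
      refine Finset.sum_congr rfl fun i hi => ?_
      rw [if_pos (Finset.mem_range_succ_iff.1 hi)]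
      rw [Algebra.smul_def ((p : ℚ_[p]) ^ (n - j)), map_pow, map_natCast]
      rw [Algebra.smul_def (x i), Algebra.smul_def (x i)]
      ring
    rw [hval] at hsummem
    have hpne : ((p : ℚ_[p]) ^ (n - j)) ≠ 0 :=
      pow_ne_zero _ (Nat.cast_ne_zero.2 hp'.ne_zero)
    have := M.smul_mem ((p : ℚ_[p]) ^ (n - j))⁻¹ hsummem
    rwa [smul_smul, inv_mul_cancel₀ hpne, one_smul] at this
  -- membership of the pieces
  have hπmem : ∀ i, i ≤ n → x i ≠ 0 → π i ∈ M := by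
    intro i hin hxi
    rcases Nat.eq_zero_or_pos n with hn0 | hn1
    · -- n = 0, so i = 0
      subst hn0
      have hi0 : i = 0 := by omega
      subst hi0
      have : α = x 0 • π 0 := by rw [hα]; simp
      have hmem : x 0 • π 0 ∈ M := this ▸ hαM
      have := M.smul_mem (x 0)⁻¹ hmem
      rwa [smul_smul, inv_mul_cancel₀ hxi, one_smul] at this
    · -- n ≥ 1
      have hD1 : (x 0 • (1 : K) + x 1 • π 1) ∈ M := by
        have := hDmem 1 le_rfl hn1
        rw [Finset.sum_range_succ, Finset.sum_range_one, hπ0] at this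
        exact this
      -- extract x 0 • 1
      have hx0 : x 0 • (1 : K) ∈ M := by
        have hmem : (∑ b ∈ Finset.range (p - 1), F (1 + b) (x 0 • (1 : K) + x 1 • π 1)) ∈ M :=
          Submodule.sum_mem _ fun b _ => hstab _ _ hD1
        have hndb : ∀ b ∈ Finset.range (p - 1), ¬ p ∣ (1 + b) := by
          intro b hb
          rw [Finset.mem_range] at hb
          intro hdvd
          have := Nat.le_of_dvd (by omega) hdvd
          omega
        have hζp : ∑ e ∈ Finset.range p, ζ 1 ^ e = 0 := by
          refine my_sum_pow_eq_zero (hζone 1 le_rfl) ?_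
          have := (hζ 1).pow_eq_one
          rwa [pow_one] at this
        have hshift : ∑ b ∈ Finset.range (p - 1), ζ 1 ^ (1 + b) = -1 := by
          have hp1 : p - 1 + 1 = p := by omega
          have hs := Finset.sum_range_succ' (fun e => ζ 1 ^ e) (p - 1)
          rw [hp1, hζp] at hs
          have h0 : (ζ 1 : K) ^ 0 = 1 := pow_zero _
          simp only [h0] at hs
          have h2 : ∑ b ∈ Finset.range (p - 1), ζ 1 ^ (b + 1) = -1 :=
            eq_neg_of_add_eq_zero_left hs.symm
          rw [← h2]
          exact Finset.sum_congr rfl fun b _ => by rw [add_comm]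
        have hval : (∑ b ∈ Finset.range (p - 1), F (1 + b) (x 0 • (1 : K) + x 1 • π 1))
            = (((p : ℚ_[p]) - 1) * x 0) • (1 : K) := by
          have hterm : ∀ b ∈ Finset.range (p - 1),
              F (1 + b) (x 0 • (1 : K) + x 1 • π 1)
                = x 0 • (1 : K) + x 1 • (ζ 1 ^ (1 + b) + algebraMap ℚ_[p] K ((p - 1 : ℚ_[p])⁻¹)) := by
            intro b hb
            rw [map_add, map_smul, map_smul, map_one, hπ1, map_add, AlgEquiv.commutes,
              hFζ _ (hndb b hb) 1 hn1]
          rw [Finset.sum_congr rfl hterm, Finset.sum_add_distrib, Finset.sum_const,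
            Finset.card_range, ← Finset.smul_sum, Finset.sum_add_distrib, hshift,
            Finset.sum_const, Finset.card_range]
          have hcard : ((p - 1 : ℕ) : ℚ_[p]) = (p : ℚ_[p]) - 1 := by
            push_cast [Nat.cast_sub (by omega : 1 ≤ p)]
            ring
          have hpm1 : ((p : ℚ_[p]) - 1) ≠ 0 := by
            intro h
            rw [sub_eq_zero] at h
            have : p = 1 := by exact_mod_cast h
            omega
          have hsm : (p - 1 : ℕ) • (algebraMap ℚ_[p] K ((p - 1 : ℚ_[p])⁻¹)) = 1 := by
            rw [nsmul_eq_mul, ← map_natCast (algebraMap ℚ_[p] K) (p - 1), ← map_mul, hcard,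
              mul_inv_cancel₀ hpm1, map_one]
          rw [hsm, neg_add_cancel, smul_zero, add_zero, ← Nat.cast_smul_eq_nsmul ℚ_[p],
            smul_smul, hcard, mul_comm]
        rw [hval] at hmem
        have hpm1 : ((p : ℚ_[p]) - 1) ≠ 0 := by
          intro h
          rw [sub_eq_zero] at h
          have : p = 1 := by exact_mod_cast h
          omega
        have := M.smul_mem ((p : ℚ_[p]) - 1)⁻¹ hmem
        rwa [smul_smul, ← mul_assoc, inv_mul_cancel₀ hpm1, one_mul] at this

      have hxπ1 : x 1 • π 1 ∈ M := by
        have h : x 1 • π 1 = (x 0 • (1 : K) + x 1 • π 1) - x 0 • (1 : K) := by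
          rw [add_sub_cancel_left]
        rw [h]; exact M.sub_mem hD1 hx0
      rcases Nat.lt_or_ge i 2 with hi2 | hi2
      · interval_cases i
        · rw [hπ0]
          have := M.smul_mem (x 0)⁻¹ hx0
          rwa [smul_smul, inv_mul_cancel₀ hxi, one_smul] at this
        · have := M.smul_mem (x 1)⁻¹ hxπ1
          rwa [smul_smul, inv_mul_cancel₀ hxi, one_smul] at this
      · have hDi := hDmem i (by omega) hin
        have hDi1 := hDmem (i - 1) (by omega) (by omega)
        have hstep : x i • π i = (∑ k ∈ Finset.range (i + 1), x k • π k)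
            - (∑ k ∈ Finset.range (i - 1 + 1), x k • π k) := by
          have h : i - 1 + 1 = i := by omega
          rw [h, Finset.sum_range_succ, add_sub_cancel_left]
        have hmem2 : x i • π i ∈ M := hstep ▸ M.sub_mem hDi hDi1
        have := M.smul_mem (x i)⁻¹ hmem2
        rwa [smul_smul, inv_mul_cancel₀ hxi, one_smul] at this
  refine le_antisymm ?_ ?_
  · rw [hMdef, Submodule.span_le]
    rintro y ⟨σ, rfl⟩
    rw [SetLike.mem_coe, hα, map_sum]
    refine Submodule.sum_mem _ fun i hi => ?_
    rw [map_smul]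
    by_cases hxi : x i = 0
    · rw [hxi, zero_smul]; exact Submodule.zero_mem _
    · refine Submodule.smul_mem _ _ ?_
      exact Submodule.mem_iSup_of_mem i (Submodule.mem_iSup_of_mem hi
        (Submodule.mem_iSup_of_mem hxi (Submodule.subset_span ⟨σ, rfl⟩)))
  · refine iSup_le fun i => iSup_le fun hi => iSup_le fun hxi => ?_
    rw [Submodule.span_le]
    rintro y ⟨τ, rfl⟩
    exact hstab τ _ (hπmem i (Finset.mem_range_succ_iff.1 hi) hxi)
end

section
/- Let p be an odd prime, n ≥ 1, and η = a_0 + Σ_{i=1}^n a_i ζ_{p^i} with a_i ∈ ℚ_p and a_1 ≠ (p-1)a_0. Then the ℚ_p-vector space generated by {η^σ : σ ∈ Gal(ℚ_p(μ_{p^n})/ℚ_p)} equals ℚ_p + Σ_{r ∈ S} Σ_{σ} ℚ_p · ζ_{p^r}^σ, where S = {r ∈ [1,n] : a_r ≠ 0}. -/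
open Polynomial

open Polynomial

lemma padic_shifted_cyclotomic_irreducible (p : ℕ) [hp : Fact p.Prime] (m : ℕ) :
    Irreducible (((cyclotomic (p ^ (m + 1)) ℚ_[p])).comp (X + 1)) := by
  set gZ : ℤ_[p][X] := (cyclotomic (p ^ (m + 1)) ℤ_[p]).comp (X + 1) with hgZ
  have hmapZ : gZ = ((cyclotomic (p ^ (m + 1)) ℤ).comp (X + 1)).map (Int.castRingHom ℤ_[p]) := by
    rw [Polynomial.map_comp, map_cyclotomic]
    simp [hgZ]
  have hmonicI : ((cyclotomic (p ^ (m + 1)) ℤ).comp (X + 1)).Monic := by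
    rw [show (X + 1 : ℤ[X]) = X + C 1 by simp]
    refine (cyclotomic.monic _ ℤ).comp (monic_X_add_C 1) fun h => ?_
    rw [natDegree_X_add_C] at h
    exact zero_ne_one h.symm
  have hmonicZ : gZ.Monic := by rw [hmapZ]; exact hmonicI.map _
  have hEI := cyclotomic_prime_pow_comp_X_add_one_isEisensteinAt p m
  have hpne : (p : ℤ_[p]) ≠ 0 := by
    exact_mod_cast (PadicInt.prime_p (p := p)).ne_zero
  have hE : gZ.IsEisensteinAt (Ideal.span {(p : ℤ_[p])}) := by
    refine hmonicZ.isEisensteinAt_of_mem_of_notMem ?_ ?_ ?_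
    · exact Ideal.IsPrime.ne_top ((Ideal.span_singleton_prime hpne).2 PadicInt.prime_p)
    · intro k hk
      rw [hmapZ] at hk ⊢
      rw [hmonicI.natDegree_map] at hk
      rw [coeff_map]
      have := hEI.mem hk
      rw [Ideal.submodule_span_eq, Ideal.mem_span_singleton] at this
      obtain ⟨c, hc⟩ := this
      rw [Ideal.mem_span_singleton, hc]
      exact ⟨(c : ℤ_[p]), by simp [hc]⟩
    · have hc0 : gZ.coeff 0 = (p : ℤ_[p]) := by
        rw [coeff_zero_eq_eval_zero, hgZ, eval_comp]
        simp [eval_one_cyclotomic_prime_pow]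
      rw [hc0, Ideal.span_singleton_pow, Ideal.mem_span_singleton]
      rintro ⟨c, hc⟩
      have h1 : (1 : ℤ_[p]) = (p : ℤ_[p]) * c := by
        apply mul_left_cancel₀ hpne
        rw [mul_one]
        calc (p:ℤ_[p]) = (p:ℤ_[p])^2 * c := hc
        _ = p * (p * c) := by ring
      exact (PadicInt.prime_p (p := p)).not_unit (IsUnit.of_mul_eq_one c h1.symm)
  have hirrZ : Irreducible gZ := by
    refine hE.irreducible ((Ideal.span_singleton_prime hpne).2 PadicInt.prime_p)
      hmonicZ.isPrimitive ?_
    rw [hmapZ, hmonicI.natDegree_map, natDegree_comp,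
      show (X + 1 : ℤ[X]) = X + C 1 by simp, natDegree_X_add_C, mul_one, natDegree_cyclotomic]
    exact Nat.totient_pos.2 (pow_pos hp.out.pos _)
  have hmap : gZ.map (algebraMap ℤ_[p] ℚ_[p]) = (cyclotomic (p ^ (m + 1)) ℚ_[p]).comp (X + 1) := by
    rw [hgZ, Polynomial.map_comp, map_cyclotomic]
    simp
  rw [← hmap]
  exact (hmonicZ.irreducible_iff_irreducible_map_fraction_map).1 hirrZ

lemma padic_minpoly_zeta (p : ℕ) [hp : Fact p.Prime] (K : Type*) [Field K] [Algebra ℚ_[p] K]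
    (n : ℕ) (hn : 1 ≤ n) (z : K) (hz : IsPrimitiveRoot z (p ^ n)) :
    minpoly ℚ_[p] z = cyclotomic (p ^ n) ℚ_[p] := by
  obtain ⟨m, rfl⟩ : ∃ m, n = m + 1 := ⟨n - 1, by omega⟩
  have hirr : Irreducible ((cyclotomic (p ^ (m + 1)) ℚ_[p]).comp (X + C 1)) := by
    rw [C_1]
    exact padic_shifted_cyclotomic_irreducible p m
  have hg_monic : ((cyclotomic (p ^ (m + 1)) ℚ_[p]).comp (X + C 1)).Monic := by
    refine (cyclotomic.monic _ _).comp (monic_X_add_C 1) fun h => ?_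
    rw [natDegree_X_add_C] at h
    exact zero_ne_one h.symm
  have hroot : aeval z (cyclotomic (p ^ (m + 1)) ℚ_[p]) = 0 := by
    rw [aeval_def, eval₂_eq_eval_map, map_cyclotomic]
    exact hz.isRoot_cyclotomic (pow_pos hp.out.pos _)
  have hrootg : aeval (z - 1) ((cyclotomic (p ^ (m + 1)) ℚ_[p]).comp (X + C 1)) = 0 := by
    rw [aeval_comp]
    simpa using hroot
  have h1 : minpoly ℚ_[p] (z - 1) = (cyclotomic (p ^ (m + 1)) ℚ_[p]).comp (X + C 1) :=
    (minpoly.eq_of_irreducible_of_monic hirr hrootg hg_monic).symm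
  have h2 := minpoly.sub_algebraMap z (1 : ℚ_[p])
  rw [map_one] at h2
  have h3 : taylor (1 : ℚ_[p]) (minpoly ℚ_[p] z) =
      taylor (1 : ℚ_[p]) (cyclotomic (p ^ (m + 1)) ℚ_[p]) := by
    rw [taylor_apply, taylor_apply, ← h2, h1]
  exact taylor_injective (1 : ℚ_[p]) h3
lemma zeta_tower {K : Type*} [Field K] (p : ℕ) (ζ : ℕ → K)
    (hcompat : ∀ n, ζ (n + 1) ^ p = ζ n) : ∀ i j, ζ (i + j) ^ p ^ j = ζ i := by
  intro i j
  induction j with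
  | zero => simp
  | succ j ih =>
    have : i + (j + 1) = (i + j) + 1 := by omega
    rw [this, pow_succ', pow_mul, hcompat (i + j), ih]

lemma padic_exists_aut (p : ℕ) [hp : Fact p.Prime] (K : Type*) [Field K] [Algebra ℚ_[p] K]
    [IsAlgClosed K] [Algebra.IsAlgebraic ℚ_[p] K]
    (n : ℕ) (hn : 1 ≤ n) (z : K) (hz : IsPrimitiveRoot z (p ^ n))
    (t : ℕ) (ht : t.Coprime p) :
    ∃ σ : K ≃ₐ[ℚ_[p]] K, σ z = z ^ t := by
  have hK' : ∀ s : K, IsIntegral ℚ_[p] s ∧ ((minpoly ℚ_[p] s).map (algebraMap ℚ_[p] K)).Splits :=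
    fun s => ⟨(Algebra.IsAlgebraic.isAlgebraic s).isIntegral, IsAlgClosed.splits _⟩
  have hprim : IsPrimitiveRoot (z ^ t) (p ^ n) := hz.pow_of_coprime t (Nat.Coprime.pow_right n ht)
  have hroot : aeval (z ^ t) (minpoly ℚ_[p] z) = 0 := by
    rw [padic_minpoly_zeta p K n hn z hz, aeval_def, eval₂_eq_eval_map, map_cyclotomic]
    exact hprim.isRoot_cyclotomic (pow_pos hp.out.pos _)
  obtain ⟨φ, hφ⟩ := IntermediateField.exists_algHom_of_splits_of_aeval hK' hroot
  exact ⟨AlgEquiv.ofBijective φ (Algebra.IsAlgebraic.algHom_bijective φ), hφ⟩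
lemma padic_exists_aut_all (p : ℕ) [hp : Fact p.Prime] (K : Type*) [Field K] [Algebra ℚ_[p] K]
    [IsAlgClosed K] [Algebra.IsAlgebraic ℚ_[p] K] (ζ : ℕ → K)
    (hζ : ∀ n, IsPrimitiveRoot (ζ n) (p ^ n)) (hcompat : ∀ n, ζ (n + 1) ^ p = ζ n)
    (n : ℕ) (hn : 1 ≤ n) (t : ℕ) (ht : t.Coprime p) :
    ∃ σ : K ≃ₐ[ℚ_[p]] K, ∀ r, r ≤ n → σ (ζ r) = ζ r ^ t := by
  obtain ⟨σ, hσ⟩ := padic_exists_aut p K n hn (ζ n) (hζ n) t ht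
  refine ⟨σ, fun r hr => ?_⟩
  have hzr : ζ n ^ p ^ (n - r) = ζ r := by
    have := zeta_tower p ζ hcompat r (n - r)
    rwa [show r + (n - r) = n by omega] at this
  rw [← hzr, map_pow, hσ, ← pow_mul, mul_comm, pow_mul]

lemma padic_aut_exponent (p : ℕ) [hp : Fact p.Prime] (K : Type*) [Field K] [Algebra ℚ_[p] K]
    (ζ : ℕ → K)
    (hζ : ∀ n, IsPrimitiveRoot (ζ n) (p ^ n)) (hcompat : ∀ n, ζ (n + 1) ^ p = ζ n)
    (n : ℕ) (hn : 1 ≤ n) (σ : K ≃ₐ[ℚ_[p]] K) :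
    ∃ t, t.Coprime p ∧ ∀ r, r ≤ n → σ (ζ r) = ζ r ^ t := by
  haveI : NeZero (p ^ n) := ⟨pow_ne_zero _ hp.out.ne_zero⟩
  have h1 : (σ (ζ n)) ^ (p ^ n) = 1 := by rw [← map_pow, (hζ n).pow_eq_one, map_one]
  obtain ⟨i, hilt, hpow⟩ := (hζ n).eq_pow_of_pow_eq_one h1
  have hprim : IsPrimitiveRoot (ζ n ^ i) (p ^ n) := by
    rw [hpow]; exact (hζ n).map_of_injective σ.injective
  have hcop : i.Coprime (p ^ n) := ((hζ n).pow_iff_coprime (pow_pos hp.out.pos n) i).1 hprim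
  have hcp : i.Coprime p := Nat.Coprime.coprime_dvd_right (dvd_pow_self p (by omega)) hcop
  refine ⟨i, hcp, fun r hr => ?_⟩
  have hzr : ζ n ^ p ^ (n - r) = ζ r := by
    have := zeta_tower p ζ hcompat r (n - r)
    rwa [show r + (n - r) = n by omega] at this
  rw [← hzr, map_pow, ← hpow, ← pow_mul, mul_comm, pow_mul]
lemma root_sum_zero {K : Type*} [Field K] (c : K) (hc : c ≠ 1) (N : ℕ) (h : c ^ N = 1) :
    ∑ t ∈ Finset.range N, c ^ t = 0 := by
  rw [geom_sum_eq hc, h, sub_self, zero_div]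

section ZetaSums

variable {K : Type*} [Field K] (p : ℕ) [hp : Fact p.Prime] (ζ : ℕ → K)
  (hζ : ∀ n, IsPrimitiveRoot (ζ n) (p ^ n)) (hcompat : ∀ n, ζ (n + 1) ^ p = ζ n)

include hζ in
lemma zeta_zero_eq_one : ζ 0 = 1 := by
  have := (hζ 0).pow_eq_one
  simpa using this

include hζ in
lemma zeta_ne_one (j : ℕ) (hj : 1 ≤ j) : ζ j ≠ 1 := by
  intro h
  have := hζ j
  rw [h] at this
  have hd := Nat.dvd_one.mp (this.dvd_of_pow_eq_one 1 (one_pow 1))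
  have := Nat.one_lt_pow (show j ≠ 0 by omega) hp.out.one_lt
  omega

include hζ in
lemma zeta_pow_eq_one (j m : ℕ) (hjm : j ≤ m) : ζ j ^ (p ^ m) = 1 := by
  have : p ^ m = p ^ j * p ^ (m - j) := by
    rw [← pow_add]; congr 1; omega
  rw [this, pow_mul, (hζ j).pow_eq_one, one_pow]

include hζ hcompat in
lemma zeta_step (i : ℕ) (hi : 1 ≤ i) : ζ i ^ p = ζ (i - 1) := by
  have := hcompat (i - 1)
  rwa [show i - 1 + 1 = i by omega] at this

include hζ hcompat in
lemma zeta_unit_sum (n i : ℕ) (h1 : 1 ≤ i) (hin : i ≤ n) :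
    ∑ t ∈ (Finset.range (p ^ n)).filter (fun t => t.Coprime p), ζ i ^ t
      = if i = 1 then -((p ^ (n - 1) : ℕ) : K) else 0 := by
  have hn : 1 ≤ n := le_trans h1 hin
  have hfull : ∑ t ∈ Finset.range (p ^ n), ζ i ^ t = 0 :=
    root_sum_zero _ (zeta_ne_one p ζ hζ i h1) _ (zeta_pow_eq_one p ζ hζ i n hin)
  have hsplit := Finset.sum_filter_add_sum_filter_not (Finset.range (p ^ n))
    (fun t => t.Coprime p) (fun t => ζ i ^ t)
  have hnc : ∑ t ∈ (Finset.range (p ^ n)).filter (fun t => ¬ t.Coprime p), ζ i ^ t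
      = ∑ s ∈ Finset.range (p ^ (n - 1)), ζ (i - 1) ^ s := by
    refine Finset.sum_nbij' (fun t => t / p) (fun s => p * s) ?_ ?_ ?_ ?_ ?_
    · intro t ht
      simp only [Finset.mem_filter, Finset.mem_range] at ht
      have hdvd : p ∣ t := by
        by_contra hd
        exact ht.2 (Nat.coprime_comm.1 (hp.out.coprime_iff_not_dvd.2 hd))
      rw [Finset.mem_range, Nat.div_lt_iff_lt_mul hp.out.pos]
      calc t < p ^ n := ht.1
      _ = p ^ (n - 1) * p := by rw [← pow_succ]; congr 1; omega
    · intro s hs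
      rw [Finset.mem_range] at hs
      simp only [Finset.mem_filter, Finset.mem_range]
      constructor
      · calc p * s < p * p ^ (n - 1) := by
              exact (Nat.mul_lt_mul_left hp.out.pos).2 hs
        _ = p ^ n := by rw [← pow_succ']; congr 1; omega
      · intro hcop
        have : p ∣ p * s := Dvd.intro s rfl
        rw [Nat.coprime_comm, hp.out.coprime_iff_not_dvd] at hcop
        exact hcop this
    · intro t ht
      simp only [Finset.mem_filter, Finset.mem_range] at ht
      have hdvd : p ∣ t := by
        by_contra hd
        exact ht.2 (Nat.coprime_comm.1 (hp.out.coprime_iff_not_dvd.2 hd))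
      exact Nat.mul_div_cancel' hdvd
    · intro s _
      exact Nat.mul_div_cancel_left s hp.out.pos
    · intro t ht
      simp only [Finset.mem_filter, Finset.mem_range] at ht
      have hdvd : p ∣ t := by
        by_contra hd
        exact ht.2 (Nat.coprime_comm.1 (hp.out.coprime_iff_not_dvd.2 hd))
      conv_lhs => rw [← Nat.mul_div_cancel' hdvd]
      rw [pow_mul, zeta_step p ζ hζ hcompat i h1]
  by_cases hi1 : i = 1
  · subst hi1
    have hval : ∑ s ∈ Finset.range (p ^ (n - 1)), ζ (1 - 1) ^ s = ((p ^ (n - 1) : ℕ) : K) := by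
      simp [zeta_zero_eq_one p ζ hζ]
    rw [if_pos rfl]
    have := hsplit
    rw [hnc, hval, hfull] at this
    linear_combination this
  · have hval : ∑ s ∈ Finset.range (p ^ (n - 1)), ζ (i - 1) ^ s = 0 :=
      root_sum_zero _ (zeta_ne_one p ζ hζ (i - 1) (by omega)) _
        (zeta_pow_eq_one p ζ hζ (i - 1) (n - 1) (by omega))
    rw [if_neg hi1]
    have := hsplit
    rw [hnc, hval, hfull] at this
    linear_combination this

end ZetaSums
lemma prim_ne_one {K : Type*} [Field K] (p : ℕ) [hp : Fact p.Prime] (j : ℕ) (hj : 1 ≤ j)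
    (z : K) (h : IsPrimitiveRoot z (p ^ j)) : z ≠ 1 := by
  intro hz
  rw [hz] at h
  have hd := Nat.dvd_one.mp (h.dvd_of_pow_eq_one 1 (one_pow 1))
  have := Nat.one_lt_pow (show j ≠ 0 by omega) hp.out.one_lt
  omega

lemma prim_pow_eq_one {K : Type*} [Field K] (p : ℕ) (j m : ℕ) (hjm : j ≤ m)
    (z : K) (h : IsPrimitiveRoot z (p ^ j)) : z ^ (p ^ m) = 1 := by
  have he : p ^ m = p ^ j * p ^ (m - j) := by rw [← pow_add]; congr 1; omega
  rw [he, pow_mul, h.pow_eq_one, one_pow]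

section ZetaSums2

variable {K : Type*} [Field K] (p : ℕ) [hp : Fact p.Prime] (ζ : ℕ → K)
  (hζ : ∀ n, IsPrimitiveRoot (ζ n) (p ^ n)) (hcompat : ∀ n, ζ (n + 1) ^ p = ζ n)

include hζ hcompat in
lemma zeta_coset_sum (n j u i : ℕ) (hj : 1 ≤ j) (hi1 : 1 ≤ i) (hin : i ≤ n)
    (hu : u.Coprime p) :
    ∑ w ∈ Finset.range (p ^ (n - j)), ζ i ^ (u * (1 + p ^ j * w))
      = if i ≤ j then (p ^ (n - j) : ℕ) • ζ i ^ u else 0 := by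
  have hexp : ∀ w : ℕ, u * (1 + p ^ j * w) = u + p ^ j * (u * w) := by intro w; ring
  by_cases hij : i ≤ j
  · rw [if_pos hij]
    rw [Finset.sum_congr rfl (fun w _ => ?_), Finset.sum_const, Finset.card_range]
    rw [hexp w, pow_add]
    have h1 : ζ i ^ (p ^ j * (u * w)) = 1 := by
      have hpj : p ^ j = p ^ i * p ^ (j - i) := by rw [← pow_add]; congr 1; omega
      rw [hpj, mul_assoc, pow_mul, (hζ i).pow_eq_one, one_pow]
    rw [h1, mul_one]
  · rw [if_neg hij]
    have hji : j < i := by omega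
    have hstep : ζ i ^ (p ^ j) = ζ (i - j) := by
      have := zeta_tower p ζ hcompat (i - j) j
      rwa [show i - j + j = i by omega] at this
    have hd : IsPrimitiveRoot (ζ (i - j) ^ u) (p ^ (i - j)) :=
      (hζ (i - j)).pow_of_coprime u (hu.pow_right (i - j))
    calc ∑ w ∈ Finset.range (p ^ (n - j)), ζ i ^ (u * (1 + p ^ j * w))
        = ∑ w ∈ Finset.range (p ^ (n - j)), ζ i ^ u * (ζ (i - j) ^ u) ^ w := by
          refine Finset.sum_congr rfl fun w _ => ?_
          rw [hexp w, pow_add, pow_mul, hstep, mul_comm u w, pow_mul, ← pow_mul, mul_comm w u,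
            pow_mul]
      _ = ζ i ^ u * ∑ w ∈ Finset.range (p ^ (n - j)), (ζ (i - j) ^ u) ^ w := by
          rw [Finset.mul_sum]
      _ = 0 := by
          rw [root_sum_zero _ (prim_ne_one p (i - j) (by omega) _ hd) _
            (prim_pow_eq_one p (i - j) (n - j) (by omega) _ hd), mul_zero]

end ZetaSums2

open IntermediateField

/-- For `η = a_0 + Σ_{i=1}^n a_i ζ_{p^i}` with `a_1 ≠ (p-1)a_0`, the
`ℚ_p`-span of the Galois conjugates of `η` equals
`ℚ_p + Σ_{r ∈ S} Σ_σ ℚ_p · ζ_{p^r}^σ`, where `S = {r ∈ [1,n] : a_r ≠ 0}`. -/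
theorem span_conjugates_eta (p : ℕ) [Fact p.Prime] (hodd : Odd p)
    (K : Type*) [Field K] [Algebra ℚ_[p] K] [IsAlgClosed K] [Algebra.IsAlgebraic ℚ_[p] K]
    (ζ : ℕ → K)
    (hζ : ∀ n, IsPrimitiveRoot (ζ n) (p ^ n))
    (hcompat : ∀ n, ζ (n + 1) ^ p = ζ n)
    (n : ℕ) (hn : 1 ≤ n) (a : ℕ → ℚ_[p])
    (ha : a 1 ≠ (p - 1) * a 0)
    (η : K) (hη : η = a 0 • (1 : K) + ∑ i ∈ Finset.Icc 1 n, a i • ζ i) :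
    Submodule.span ℚ_[p] {y : K | ∃ σ : K ≃ₐ[ℚ_[p]] K, y = σ η} =
      Submodule.span ℚ_[p]
        ({1} ∪ ⋃ r ∈ {r : ℕ | 1 ≤ r ∧ r ≤ n ∧ a r ≠ 0},
          {y : K | ∃ σ : K ≃ₐ[ℚ_[p]] K, y = σ (ζ r)}) := by
  classical
  have hp' : p.Prime := Fact.out
  set W := Submodule.span ℚ_[p] {y : K | ∃ σ : K ≃ₐ[ℚ_[p]] K, y = σ η} with hW
  -- membership of conjugates of η, parametrized by exponents
  have hEmem : ∀ t : ℕ, t.Coprime p →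
      (a 0 • (1 : K) + ∑ i ∈ Finset.Icc 1 n, a i • ζ i ^ t) ∈ W := by
    intro t ht
    obtain ⟨σ, hσ⟩ := padic_exists_aut_all p K ζ hζ hcompat n hn t ht
    have heq : a 0 • (1 : K) + ∑ i ∈ Finset.Icc 1 n, a i • ζ i ^ t = σ η := by
      rw [hη, map_add, map_smul, map_one, map_sum]
      congr 1
      refine Finset.sum_congr rfl fun i hi => ?_
      rw [map_smul, hσ i (Finset.mem_Icc.mp hi).2]
    rw [heq]
    exact Submodule.subset_span ⟨σ, rfl⟩
  -- step one : 1 ∈ W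
  have hone : (1 : K) ∈ W := by
    set U := (Finset.range (p ^ n)).filter (fun t => t.Coprime p) with hU
    have hUcop : ∀ t ∈ U, t.Coprime p := fun t ht => (Finset.mem_filter.mp ht).2
    have hcardnc : ((Finset.range (p ^ n)).filter (fun t => ¬ t.Coprime p)).card
        = p ^ (n - 1) := by
      rw [← Finset.card_range (p ^ (n - 1))]
      refine Finset.card_nbij' (fun t => t / p) (fun s => p * s) ?_ ?_ ?_ ?_
      · intro t ht
        simp only [Finset.mem_coe, Finset.mem_filter, Finset.mem_range] at ht
        have hdvd : p ∣ t := by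
          by_contra hd
          exact ht.2 (Nat.coprime_comm.1 (hp'.coprime_iff_not_dvd.2 hd))
        rw [Finset.mem_coe, Finset.mem_range, Nat.div_lt_iff_lt_mul hp'.pos]
        calc t < p ^ n := ht.1
        _ = p ^ (n - 1) * p := by rw [← pow_succ]; congr 1; omega
      · intro s hs
        rw [Finset.mem_coe, Finset.mem_range] at hs
        simp only [Finset.mem_coe, Finset.mem_filter, Finset.mem_range]
        constructor
        · calc p * s < p * p ^ (n - 1) := by exact (Nat.mul_lt_mul_left hp'.pos).2 hs
          _ = p ^ n := by rw [← pow_succ']; congr 1; omega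
        · intro hcop
          rw [Nat.coprime_comm, hp'.coprime_iff_not_dvd] at hcop
          exact hcop (Dvd.intro s rfl)
      · intro t ht
        simp only [Finset.mem_coe, Finset.mem_filter, Finset.mem_range] at ht
        have hdvd : p ∣ t := by
          by_contra hd
          exact ht.2 (Nat.coprime_comm.1 (hp'.coprime_iff_not_dvd.2 hd))
        exact Nat.mul_div_cancel' hdvd
      · intro s _
        exact Nat.mul_div_cancel_left s hp'.pos
    have hcard : U.card = p ^ n - p ^ (n - 1) := by
      have := Finset.card_filter_add_card_filter_not (s := Finset.range (p ^ n))
        (p := fun t => t.Coprime p)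
      rw [hcardnc, Finset.card_range] at this
      rw [hU]
      omega
    have hsum : ∑ t ∈ U, (a 0 • (1 : K) + ∑ i ∈ Finset.Icc 1 n, a i • ζ i ^ t)
        = (((p ^ n - p ^ (n - 1) : ℕ) : ℚ_[p]) * a 0
            - ((p ^ (n - 1) : ℕ) : ℚ_[p]) * a 1) • (1 : K) := by
      rw [Finset.sum_add_distrib, Finset.sum_const, Finset.sum_comm]
      have hinner : ∀ i ∈ Finset.Icc 1 n, ∑ t ∈ U, a i • ζ i ^ t
          = a i • (if i = 1 then -((p ^ (n - 1) : ℕ) : K) else 0) := by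
        intro i hi
        rw [← Finset.smul_sum,
          zeta_unit_sum p ζ hζ hcompat n i (Finset.mem_Icc.mp hi).1 (Finset.mem_Icc.mp hi).2]
      rw [Finset.sum_congr rfl hinner,
        Finset.sum_eq_single_of_mem 1 (Finset.mem_Icc.mpr ⟨le_refl 1, hn⟩)
          (fun b _ hb => by rw [if_neg hb, smul_zero]),
        if_pos rfl, hcard]
      have hc1 : (U.card : ℕ) • (a 0 • (1 : K)) = (((p ^ n - p ^ (n - 1) : ℕ) : ℚ_[p]) * a 0) • (1 : K) := by
        rw [hcard, ← Nat.cast_smul_eq_nsmul ℚ_[p], smul_smul]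
      have hc2 : a 1 • (-((p ^ (n - 1) : ℕ) : K))
          = -(((p ^ (n - 1) : ℕ) : ℚ_[p]) * a 1) • (1 : K) := by
        have : ((p ^ (n - 1) : ℕ) : K) = ((p ^ (n - 1) : ℕ) : ℚ_[p]) • (1 : K) := by
          rw [← Algebra.algebraMap_eq_smul_one, map_natCast]
        rw [this, smul_neg, smul_smul, ← neg_smul, mul_comm]
      rw [hcard] at hc1
      rw [hc1, hc2, ← add_smul]
      congr 1
      ring
    have hcmem : (((p ^ n - p ^ (n - 1) : ℕ) : ℚ_[p]) * a 0
        - ((p ^ (n - 1) : ℕ) : ℚ_[p]) * a 1) • (1 : K) ∈ W := by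
      rw [← hsum]
      exact Submodule.sum_mem _ fun t ht => hEmem t (hUcop t ht)
    have hle : p ^ (n - 1) ≤ p ^ n := Nat.pow_le_pow_right hp'.pos (by omega)
    have hcne : (((p ^ n - p ^ (n - 1) : ℕ) : ℚ_[p]) * a 0
        - ((p ^ (n - 1) : ℕ) : ℚ_[p]) * a 1) ≠ 0 := by
      have hfact : (((p ^ n - p ^ (n - 1) : ℕ) : ℚ_[p]) * a 0
          - ((p ^ (n - 1) : ℕ) : ℚ_[p]) * a 1)
          = ((p : ℚ_[p]) ^ (n - 1)) * (((p : ℚ_[p]) - 1) * a 0 - a 1) := by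
        rw [Nat.cast_sub hle]
        push_cast
        have hpn : (p : ℚ_[p]) ^ n = (p : ℚ_[p]) ^ (n - 1) * p := by
          rw [← pow_succ]; congr 1; omega
        rw [hpn]; ring
      rw [hfact]
      refine mul_ne_zero (pow_ne_zero _ ?_) ?_
      · exact_mod_cast hp'.ne_zero
      · intro h
        apply ha
        linear_combination -h
    rw [← Submodule.smul_mem_iff W hcne]
    exact hcmem
  -- step two : partial sums
  have hP : ∀ j, j ≤ n → ∀ u, u.Coprime p →
      (a 0 • (1 : K) + ∑ i ∈ Finset.Icc 1 j, a i • ζ i ^ u) ∈ W := by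
    intro j hjn u hu
    rcases Nat.eq_zero_or_pos j with rfl | hj
    · rw [Finset.Icc_eq_empty (by omega), Finset.sum_empty, add_zero]
      exact Submodule.smul_mem _ _ hone
    · have hcop : ∀ w : ℕ, (u * (1 + p ^ j * w)).Coprime p := by
        intro w
        refine Nat.Coprime.mul hu ?_
        rw [Nat.coprime_comm, hp'.coprime_iff_not_dvd]
        intro hdvd
        have h1 : p ∣ p ^ j * w := dvd_mul_of_dvd_left (dvd_pow_self p (by omega)) w
        have h2 : p ∣ 1 := by
          have := Nat.dvd_sub hdvd h1
          simpa using this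
        exact hp'.ne_one (Nat.dvd_one.mp h2)
      have hsum : ∑ w ∈ Finset.range (p ^ (n - j)),
          (a 0 • (1 : K) + ∑ i ∈ Finset.Icc 1 n, a i • ζ i ^ (u * (1 + p ^ j * w)))
          = (p ^ (n - j) : ℕ) • (a 0 • (1 : K) + ∑ i ∈ Finset.Icc 1 j, a i • ζ i ^ u) := by
        rw [Finset.sum_add_distrib, Finset.sum_const, Finset.card_range, Finset.sum_comm,
          smul_add]
        congr 1
        have hinner : ∀ i ∈ Finset.Icc 1 n,
            ∑ w ∈ Finset.range (p ^ (n - j)), a i • ζ i ^ (u * (1 + p ^ j * w))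
            = if i ≤ j then a i • ((p ^ (n - j) : ℕ) • ζ i ^ u) else 0 := by
          intro i hi
          rw [← Finset.smul_sum,
            zeta_coset_sum p ζ hζ hcompat n j u i hj (Finset.mem_Icc.mp hi).1
              (Finset.mem_Icc.mp hi).2 hu]
          split_ifs with h
          · rfl
          · rw [smul_zero]
        rw [Finset.sum_congr rfl hinner, ← Finset.sum_filter]
        have hfe : (Finset.Icc 1 n).filter (fun i => i ≤ j) = Finset.Icc 1 j := by
          ext i
          simp only [Finset.mem_filter, Finset.mem_Icc]
          omega
        rw [hfe, Finset.smul_sum]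
        refine Finset.sum_congr rfl fun i _ => ?_
        rw [smul_comm]
      have hnsne : ((p ^ (n - j) : ℕ) : ℚ_[p]) ≠ 0 := by
        exact_mod_cast pow_ne_zero _ hp'.ne_zero
      rw [← Submodule.smul_mem_iff W hnsne, Nat.cast_smul_eq_nsmul, ← hsum]
      exact Submodule.sum_mem _ fun w _ => hEmem _ (hcop w)
  -- step three : each conjugate of ζ r in W
  have hzeta : ∀ r, 1 ≤ r → r ≤ n → a r ≠ 0 → ∀ u, u.Coprime p → ζ r ^ u ∈ W := by
    intro r hr1 hrn har u hu
    have hPr := hP r hrn u hu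
    have hPr1 := hP (r - 1) (by omega) u hu
    have hdiff : (a 0 • (1 : K) + ∑ i ∈ Finset.Icc 1 r, a i • ζ i ^ u)
        - (a 0 • (1 : K) + ∑ i ∈ Finset.Icc 1 (r - 1), a i • ζ i ^ u)
        = a r • ζ r ^ u := by
      have hr : r = (r - 1) + 1 := by omega
      rw [hr, Finset.sum_Icc_succ_top (by omega), ← hr]
      abel
    have : a r • ζ r ^ u ∈ W := by
      rw [← hdiff]
      exact Submodule.sub_mem _ hPr hPr1
    rwa [Submodule.smul_mem_iff W har] at this
  -- conclusion
  apply le_antisymm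
  · rw [Submodule.span_le]
    rintro y ⟨σ, rfl⟩
    rw [hη, map_add, map_smul, map_one, map_sum]
    refine Submodule.add_mem _ (Submodule.smul_mem _ _ (Submodule.subset_span (Or.inl rfl))) ?_
    refine Submodule.sum_mem _ fun i hi => ?_
    rw [map_smul]
    by_cases hai : a i = 0
    · rw [hai, zero_smul]; exact Submodule.zero_mem _
    · refine Submodule.smul_mem _ _ (Submodule.subset_span (Or.inr ?_))
      simp only [Set.mem_iUnion, Set.mem_setOf_eq]
      obtain ⟨hi1, hi2⟩ := Finset.mem_Icc.mp hi
      exact ⟨i, ⟨hi1, hi2, hai⟩, σ, rfl⟩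
  · rw [Submodule.span_le]
    rintro y (hy | hy)
    · rw [Set.mem_singleton_iff] at hy
      rw [hy]
      exact hone
    · simp only [Set.mem_iUnion, Set.mem_setOf_eq] at hy
      obtain ⟨r, ⟨hr1, hrn, har⟩, σ, rfl⟩ := hy
      obtain ⟨t, ht, hts⟩ := padic_aut_exponent p K ζ hζ hcompat n hn σ
      rw [hts r hrn]
      exact hzeta r hr1 hrn har t ht
end

section
/- Let p be an odd prime, u ∈ 1 + pℤ_p a topological generator of 1 + pℤ_p, and j a nonzero integer with |j| < p. In the ring ℤ_p[γ]/(γ^{p^{n-1}} - 1), if m ≥ n then the element Φ_m(u^{-j}γ)/p = (u^{-jp^m} - 1)/(p(u^{-jp^{m-1}} - 1)) is a unit of ℤ_p; here Φ_m is the p^m-th cyclotomic polynomial. -/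
theorem cubic_expand {R : Type*} [CommRing R] (x : R) (k : ℕ) :
    ∃ s : R, (1+x)^k = 1 + k*x + (k.choose 2)*x^2 + x^3*s := by
  induction k with
  | zero => exact ⟨0, by simp⟩
  | succ k ih =>
    obtain ⟨s, hs⟩ := ih
    refine ⟨s + x*s + (k.choose 2 : R), ?_⟩
    have h2 : ((k+1).choose 2 : R) = (k.choose 2 : R) + k := by
      have : (k+1).choose 2 = k.choose 2 + k := by
        rw [Nat.choose_succ_succ]; simp [Nat.choose_one_right]; omega
      rw [this]; push_cast; ring
    rw [pow_succ, hs, h2]; push_cast; ring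

variable {p : ℕ} [Fact p.Prime]

theorem unit_one_add_p_mul (t : ℤ_[p]) : IsUnit (1 + (p:ℤ_[p])*t) := by
  rw [PadicInt.isUnit_iff]
  have h1 : ‖(1:ℤ_[p])‖ = 1 := norm_one
  have h2 : ‖(p:ℤ_[p])*t‖ < 1 := by
    calc ‖(p:ℤ_[p])*t‖ ≤ ‖(p:ℤ_[p])‖*‖t‖ := norm_mul_le _ _
    _ ≤ ‖(p:ℤ_[p])‖*1 := by
        exact mul_le_mul_of_nonneg_left t.norm_le_one (norm_nonneg _)
    _ < 1 := by rw [mul_one, PadicInt.norm_p]; exact inv_lt_one_of_one_lt₀ (by exact_mod_cast (Fact.out : p.Prime).one_lt)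
  rw [PadicInt.norm_add_eq_max_of_ne (by rw [h1]; exact (ne_of_lt h2).symm), h1]
  exact max_eq_left h2.le

theorem unit_nat_add_p_mul (k : ℕ) (hk : ¬ p ∣ k) (t : ℤ_[p]) : IsUnit ((k:ℤ_[p]) + (p:ℤ_[p])*t) := by
  rw [PadicInt.isUnit_iff]
  have h1 : ‖((k:ℤ):ℤ_[p])‖ = 1 := by
    rcases lt_or_eq_of_le ((k:ℤ_[p]).norm_le_one) with h | h
    · exfalso; rw [show ((k:ℤ_[p])) = (((k:ℤ)):ℤ_[p]) by push_cast; ring] at h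
      rw [PadicInt.norm_int_lt_one_iff_dvd] at h
      exact hk (by exact_mod_cast h)
    · exact_mod_cast h
  have h1' : ‖(k:ℤ_[p])‖ = 1 := by exact_mod_cast h1
  have h2 : ‖(p:ℤ_[p])*t‖ < 1 := by
    calc ‖(p:ℤ_[p])*t‖ ≤ ‖(p:ℤ_[p])‖*‖t‖ := norm_mul_le _ _
    _ ≤ ‖(p:ℤ_[p])‖*1 := mul_le_mul_of_nonneg_left t.norm_le_one (norm_nonneg _)
    _ < 1 := by rw [mul_one, PadicInt.norm_p]; exact inv_lt_one_of_one_lt₀ (by exact_mod_cast (Fact.out : p.Prime).one_lt)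
  rw [PadicInt.norm_add_eq_max_of_ne (by rw [h1']; exact (ne_of_lt h2).symm), h1']
  exact max_eq_left h2.le

/-- one p-power step -/
theorem step_pow (hodd : Odd p) (y : ℤ_[p]) :
    ∃ t : ℤ_[p], (1 + (p:ℤ_[p])*y)^p = 1 + (p:ℤ_[p])*((p:ℤ_[p])*y)*(1 + (p:ℤ_[p])*t) := by
  obtain ⟨s, hs⟩ := cubic_expand ((p:ℤ_[p])*y) p
  have hp3 : 3 ≤ p := by
    have h2 := (Fact.out : p.Prime).two_le
    rcases Nat.lt_or_ge p 3 with h | h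
    · interval_cases p
      · exact absurd hodd (by decide)
    · exact h
  obtain ⟨c, hc⟩ : p ∣ p.choose 2 := Nat.Prime.dvd_choose_self (Fact.out) (by omega) (by omega)
  refine ⟨c*y + y^2*s, ?_⟩
  rw [hs, hc]
  push_cast
  ring

theorem iter_pow (hodd : Odd p) (y : ℤ_[p]) (M : ℕ) :
    ∃ t : ℤ_[p], (1 + (p:ℤ_[p])*y)^(p^M) = 1 + (p:ℤ_[p])^M*((p:ℤ_[p])*y)*(1 + (p:ℤ_[p])*t) := by
  induction M with
  | zero => exact ⟨0, by simp⟩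
  | succ M ih =>
    obtain ⟨t, ht⟩ := ih
    obtain ⟨t', ht'⟩ := step_pow hodd ((p:ℤ_[p])^M*y*(1 + (p:ℤ_[p])*t))
    refine ⟨t + t' + (p:ℤ_[p])*t*t', ?_⟩
    have : (1 + (p:ℤ_[p])*y)^(p^(M+1)) = ((1 + (p:ℤ_[p])*y)^(p^M))^p := by
      rw [← pow_mul, pow_succ]
    rw [this, ht]
    have he : (1:ℤ_[p]) + (p:ℤ_[p])^M*((p:ℤ_[p])*y)*(1 + (p:ℤ_[p])*t)
        = 1 + (p:ℤ_[p])*((p:ℤ_[p])^M*y*(1 + (p:ℤ_[p])*t)) := by ring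
    rw [he, ht']
    ring

theorem kpow (k : ℕ) (hk : ¬ p ∣ k) (y : ℤ_[p]) (hy : IsUnit y) :
    ∃ y' : ℤ_[p], IsUnit y' ∧ (1 + (p:ℤ_[p])*y)^k = 1 + (p:ℤ_[p])*y' := by
  obtain ⟨s, hs⟩ := cubic_expand ((p:ℤ_[p])*y) k
  refine ⟨y * ((k:ℤ_[p]) + (p:ℤ_[p])*((k.choose 2:ℤ_[p])*y + (p:ℤ_[p])*y^2*s)), ?_, ?_⟩
  · exact hy.mul (unit_nat_add_p_mul k hk _)
  · rw [hs]; push_cast; ring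

theorem final_piece (hodd : Odd p) (b y' : ℤ_[p]) (hy' : IsUnit y')
    (hb : b = 1 + (p:ℤ_[p])*y') (m : ℕ) (hm1 : 1 ≤ m) :
    ∃ w : ℤ_[p]ˣ,
      ((b:ℚ_[p]) ^ (p ^ m) - 1) /
          ((p : ℚ_[p]) * ((b:ℚ_[p]) ^ (p ^ (m - 1)) - 1)) = ((w : ℤ_[p]) : ℚ_[p]) := by
  obtain ⟨M, rfl⟩ : ∃ M, m = M + 1 := ⟨m - 1, by omega⟩
  simp only [Nat.add_sub_cancel]
  obtain ⟨t₁, ht₁⟩ := iter_pow hodd y' (M+1)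
  obtain ⟨t₂, ht₂⟩ := iter_pow hodd y' M
  rw [← hb] at ht₁ ht₂
  obtain ⟨e₁, he₁⟩ := unit_one_add_p_mul t₁
  obtain ⟨e₂, he₂⟩ := unit_one_add_p_mul t₂
  obtain ⟨Y, hY⟩ := hy'
  refine ⟨e₁ * e₂⁻¹, ?_⟩
  have hq₁ : (b:ℚ_[p])^(p^(M+1)) = 1 + (p:ℚ_[p])^(M+1)*((p:ℚ_[p])*(y':ℚ_[p]))*((e₁:ℤ_[p]):ℚ_[p]) := by
    rw [he₁]
    have := congrArg (fun z : ℤ_[p] => (z : ℚ_[p])) ht₁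
    push_cast at this ⊢
    exact this
  have hq₂ : (b:ℚ_[p])^(p^M) = 1 + (p:ℚ_[p])^M*((p:ℚ_[p])*(y':ℚ_[p]))*((e₂:ℤ_[p]):ℚ_[p]) := by
    rw [he₂]
    have := congrArg (fun z : ℤ_[p] => (z : ℚ_[p])) ht₂
    push_cast at this ⊢
    exact this
  have hp0 : (p:ℚ_[p]) ≠ 0 := by exact_mod_cast (Fact.out : p.Prime).ne_zero
  have hy0 : (y':ℚ_[p]) ≠ 0 := by
    rw [← hY]; exact PadicInt.coe_ne_zero.mpr Y.ne_zero
  have he₂0 : ((e₂:ℤ_[p]):ℚ_[p]) ≠ 0 := PadicInt.coe_ne_zero.mpr e₂.ne_zero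
  have hD : (p:ℚ_[p]) * ((b:ℚ_[p])^(p^M) - 1) ≠ 0 := by
    rw [hq₂]
    have : (1:ℚ_[p]) + (p:ℚ_[p])^M*((p:ℚ_[p])*(y':ℚ_[p]))*((e₂:ℤ_[p]):ℚ_[p]) - 1
        = (p:ℚ_[p])^M*((p:ℚ_[p])*(y':ℚ_[p]))*((e₂:ℤ_[p]):ℚ_[p]) := by ring
    rw [this]
    exact mul_ne_zero hp0 (mul_ne_zero (mul_ne_zero (pow_ne_zero _ hp0) (mul_ne_zero hp0 hy0)) he₂0)
  rw [div_eq_iff hD, hq₁, hq₂]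
  have hwinv : ((((e₁ * e₂⁻¹ : ℤ_[p]ˣ)):ℤ_[p]):ℚ_[p]) * ((e₂:ℤ_[p]):ℚ_[p]) = ((e₁:ℤ_[p]):ℚ_[p]) := by
    have : ((e₁ * e₂⁻¹ : ℤ_[p]ˣ):ℤ_[p]) * (e₂:ℤ_[p]) = (e₁:ℤ_[p]) := by
      rw [← Units.val_mul, inv_mul_cancel_right]
    exact_mod_cast congrArg (fun z : ℤ_[p] => (z : ℚ_[p])) this
  apply mul_right_cancel₀ he₂0
  linear_combination (-(p:ℚ_[p])^(M+1)*((p:ℚ_[p])*(y':ℚ_[p]))*(((e₂:ℤ_[p]):ℚ_[p]))) * hwinv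

/-- Let `u` be a topological generator of `1 + pℤ_p` (i.e. `v_p(u-1) = 1`)
and `j` a nonzero integer with `|j| < p`. For `m ≥ n ≥ 1`, the element
`Φ_m(u^{-j}γ)/p`, which in `ℤ_p[γ]/(γ^{p^{n-1}} - 1)` reduces to the scalar
`(u^{-jp^m} - 1)/(p(u^{-jp^{m-1}} - 1))`, is a unit of `ℤ_p`. -/
theorem cyclotomic_value_is_unit (p : ℕ) [Fact p.Prime] (hodd : Odd p)
    (u : ℤ_[p]) (hu : ∃ y : ℤ_[p], u = 1 + (p : ℤ_[p]) * y)
    (hugen : (u - 1).valuation = 1)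
    (j : ℤ) (hj : j ≠ 0) (hjp : |j| < (p : ℤ))
    (n m : ℕ) (hn : 1 ≤ n) (hm : n ≤ m) :
    ∃ w : ℤ_[p]ˣ,
      (((u : ℚ_[p]) ^ (-j)) ^ (p ^ m) - 1) /
          ((p : ℚ_[p]) * (((u : ℚ_[p]) ^ (-j)) ^ (p ^ (m - 1)) - 1)) =
        ((w : ℤ_[p]) : ℚ_[p]) := by
  have hpprime : p.Prime := Fact.out
  obtain ⟨y, hy⟩ := hu
  have hpz : (p:ℤ_[p]) ≠ 0 := by exact_mod_cast hpprime.ne_zero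
  have hu1 : u - 1 = (p:ℤ_[p]) * y := by rw [hy]; ring
  have hy0 : y ≠ 0 := by
    rintro rfl
    rw [mul_zero] at hu1
    rw [hu1, PadicInt.valuation_zero] at hugen
    exact one_ne_zero hugen.symm
  have hval : y.valuation = 0 := by
    rw [hu1, show (p:ℤ_[p])*y = (p:ℤ_[p])^1*y by ring,
      PadicInt.valuation_p_pow_mul 1 y hy0] at hugen
    omega
  have hyu : IsUnit y := by
    rw [PadicInt.isUnit_iff, PadicInt.norm_eq_zpow_neg_valuation hy0, hval]
    simp
  set k := j.natAbs with hkdef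
  have hk0 : k ≠ 0 := Int.natAbs_ne_zero.mpr hj
  have hkp : k < p := by
    have : (k:ℤ) < p := by rw [hkdef, ← Int.abs_eq_natAbs]; exact hjp
    exact_mod_cast this
  have hk : ¬ p ∣ k := Nat.not_dvd_of_pos_of_lt (Nat.pos_of_ne_zero hk0) hkp
  have huu : IsUnit u := by rw [hy]; exact unit_one_add_p_mul y
  obtain ⟨U, hU⟩ := huu
  have m1 : 1 ≤ m := le_trans hn hm
  rcases hj.lt_or_gt with hjneg | hjpos
  · -- j < 0 : -j = k, b = u^k
    obtain ⟨y'', hy''u, hy''⟩ := kpow k hk y hyu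
    have hb : u^k = 1 + (p:ℤ_[p])*y'' := by rw [hy]; exact hy''
    obtain ⟨w, hw⟩ := final_piece hodd (u^k) y'' hy''u hb m m1
    refine ⟨w, ?_⟩
    have hub : ((u:ℚ_[p]))^(-j) = ((u^k : ℤ_[p]):ℚ_[p]) := by
      have hjk : -j = (k:ℤ) := by
        rw [hkdef]; omega
      rw [hjk, zpow_natCast]
      push_cast
      ring
    rw [hub]
    exact hw
  · -- j > 0 : -j = -k, b = (u⁻¹)^k
    set v : ℤ_[p] := ((U⁻¹ : ℤ_[p]ˣ) : ℤ_[p]) with hvdef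
    have hv : u * v = 1 := by rw [← hU, hvdef]; exact_mod_cast U.mul_inv
    have hvu : IsUnit v := ⟨U⁻¹, rfl⟩
    have hvform : v = 1 + (p:ℤ_[p]) * (-(y*v)) := by
      have h1 : v * u = 1 := by rw [mul_comm]; exact hv
      linear_combination h1 - v*hy
    have hyvu : IsUnit (-(y*v)) := (hyu.mul hvu).neg
    obtain ⟨y'', hy''u, hy''⟩ := kpow k hk _ hyvu
    have hb : v^k = 1 + (p:ℤ_[p])*y'' := by rw [hvform]; exact hy''
    obtain ⟨w, hw⟩ := final_piece hodd (v^k) y'' hy''u hb m m1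
    refine ⟨w, ?_⟩
    have hvq : (v:ℚ_[p]) = (u:ℚ_[p])⁻¹ := by
      have h2 : (u:ℚ_[p]) * (v:ℚ_[p]) = 1 := by exact_mod_cast congrArg (fun z : ℤ_[p] => (z:ℚ_[p])) hv
      exact (inv_eq_of_mul_eq_one_right h2).symm
    have hub : ((u:ℚ_[p]))^(-j) = ((v^k : ℤ_[p]):ℚ_[p]) := by
      have hjk : -j = -(k:ℤ) := by rw [hkdef]; omega
      rw [hjk, zpow_neg, zpow_natCast, ← inv_pow, ← hvq]
      push_cast
      ring
    rw [hub]
    exact hw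
end

section
/- Let p be an odd prime and n ≥ 1. Define ℚ_{p,n}^+ = {x ∈ ℚ_p(μ_{p^n}) : Tr_{n/m+1}(x) ∈ ℚ_p(μ_{p^m}) for all even m with 0 ≤ m ≤ n-1} and ℚ_{p,n}^- analogously with odd m. Then ℚ_{p,n}^+ ∩ ℚ_{p,n}^- = ℚ_p and ℚ_{p,n}^+ + ℚ_{p,n}^- = ℚ_p(μ_{p^n}). -/
set_option synthInstance.maxHeartbeats 1000000
set_option maxHeartbeats 1000000

open IntermediateField

section helper
variable {F E : Type*} [Field F] [Field E] [Algebra F E]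

noncomputable def ialg {A B : IntermediateField F E} (h : A ≤ B) : Algebra A B :=
  ((IntermediateField.inclusion h).toRingHom).toAlgebra

noncomputable def itr {A B : IntermediateField F E} (h : A ≤ B) (x : B) : A :=
  letI := ialg h
  Algebra.trace A B x

noncomputable def idg {A B : IntermediateField F E} (h : A ≤ B) : ℕ :=
  letI := ialg h
  Module.finrank A B

noncomputable def ipr {A B : IntermediateField F E} (h : A ≤ B) (x : B) : B :=
  ((idg h : F)⁻¹) • (IntermediateField.inclusion h (itr h x))

variable {A B C : IntermediateField F E}

lemma ialg_tower (h : A ≤ B) : letI := ialg h; IsScalarTower F A B := by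
  letI := ialg h
  refine IsScalarTower.of_algebraMap_eq fun x => ?_
  rfl

lemma ialg_fd (h : A ≤ B) [FiniteDimensional F B] : letI := ialg h; FiniteDimensional A B := by
  letI := ialg h; haveI := ialg_tower h
  exact FiniteDimensional.right F A B

lemma idg_ne_zero (h : A ≤ B) [FiniteDimensional F B] : idg h ≠ 0 := by
  unfold idg
  letI := ialg h; haveI := ialg_fd h
  exact Module.finrank_pos.ne'

lemma inclusion_inclusion (hab : A ≤ B) (hbc : B ≤ C) (x : A) :
    inclusion hbc (inclusion hab x) = inclusion (hab.trans hbc) x := Subtype.ext rfl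

lemma itr_trans (hab : A ≤ B) (hbc : B ≤ C) [FiniteDimensional F B] [FiniteDimensional F C]
    (x : C) : itr (hab.trans hbc) x = itr hab (itr hbc x) := by
  unfold itr
  letI := ialg hab; letI := ialg hbc; letI := ialg (hab.trans hbc)
  haveI := ialg_tower hab; haveI := ialg_tower hbc; haveI := ialg_tower (hab.trans hbc)
  haveI := ialg_fd hab; haveI := ialg_fd hbc
  haveI : IsScalarTower A B C := IsScalarTower.of_algebraMap_eq fun y => rfl
  exact (Algebra.trace_trace x).symm

lemma itr_inclusion (h : A ≤ B) [FiniteDimensional F B] (y : A) :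
    itr h (inclusion h y) = idg h • y := by
  unfold itr idg
  letI := ialg h
  exact Algebra.trace_algebraMap y

lemma itr_add (h : A ≤ B) (x y : B) : itr h (x + y) = itr h x + itr h y := by
  unfold itr
  letI := ialg h
  exact map_add _ x y

lemma itr_sub (h : A ≤ B) (x y : B) : itr h (x - y) = itr h x - itr h y := by
  unfold itr
  letI := ialg h
  exact map_sub _ x y

lemma itr_zero (h : A ≤ B) : itr h 0 = 0 := by
  unfold itr
  letI := ialg h
  exact map_zero _

lemma itr_fsmul (h : A ≤ B) (c : F) (x : B) : itr h (c • x) = c • itr h x := by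
  unfold itr
  letI := ialg h; haveI := ialg_tower h
  exact LinearMap.map_smul_of_tower _ c x


lemma itr_nsmul (h : A ≤ B) (d : ℕ) (x : B) : itr h (d • x) = d • itr h x := by
  unfold itr
  letI := ialg h
  exact map_nsmul _ d x

lemma incl_incl (hab : A ≤ B) (hbc : B ≤ C) (x : A) :
    inclusion hbc (inclusion hab x) = inclusion (hab.trans hbc) x := Subtype.ext rfl

lemma ipr_zero (h : A ≤ B) : ipr h 0 = 0 := by
  unfold ipr
  rw [itr_zero, map_zero, smul_zero]

lemma ipr_add (h : A ≤ B) (x y : B) : ipr h (x + y) = ipr h x + ipr h y := by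
  unfold ipr
  rw [itr_add, map_add, smul_add]

lemma ipr_sub (h : A ≤ B) (x y : B) : ipr h (x - y) = ipr h x - ipr h y := by
  unfold ipr
  rw [itr_sub, map_sub, smul_sub]

lemma ipr_fsmul (h : A ≤ B) (c : F) (x : B) : ipr h (c • x) = c • ipr h x := by
  unfold ipr
  rw [itr_fsmul, map_smul, smul_comm]

lemma ipr_inclusion (h : A ≤ B) [FiniteDimensional F B] [CharZero F] (y : A) :
    ipr h (inclusion h y) = inclusion h y := by
  unfold ipr
  rw [itr_inclusion, map_nsmul, ← Nat.cast_smul_eq_nsmul F, smul_smul,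
    inv_mul_cancel₀ (by exact_mod_cast idg_ne_zero h), one_smul]

/-- π_A ∘ π_B = π_A for A ≤ B ≤ C. -/
lemma ipr_comp (hab : A ≤ B) (hbc : B ≤ C) [FiniteDimensional F B] [FiniteDimensional F C]
    [CharZero F] (x : C) :
    ipr (hab.trans hbc) (ipr hbc x) = ipr (hab.trans hbc) x := by
  have hdb : ((idg hbc : F)) ≠ 0 := by exact_mod_cast idg_ne_zero hbc
  have e1 : ipr hbc x = ((idg hbc : F))⁻¹ • inclusion hbc (itr hbc x) := rfl
  rw [e1, ipr_fsmul]
  have e2 : ipr (hab.trans hbc) (inclusion hbc (itr hbc x)) =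
      (idg hbc : F) • ipr (hab.trans hbc) x := by
    show ((idg (hab.trans hbc) : F))⁻¹ •
          inclusion (hab.trans hbc) (itr (hab.trans hbc) (inclusion hbc (itr hbc x)))
        = (idg hbc : F) • (((idg (hab.trans hbc) : F))⁻¹ •
          inclusion (hab.trans hbc) (itr (hab.trans hbc) x))
    rw [itr_trans hab hbc, itr_inclusion, itr_nsmul, map_nsmul,
      ← Nat.cast_smul_eq_nsmul F, itr_trans hab hbc, smul_comm]
  rw [e2, smul_smul, inv_mul_cancel₀ hdb, one_smul]

/-- π_B fixes anything in the image of π_A, A ≤ B ≤ C. -/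
lemma ipr_fix (hab : A ≤ B) (hbc : B ≤ C) [FiniteDimensional F C] [CharZero F] (x : C) :
    ipr hbc (ipr (hab.trans hbc) x) = ipr (hab.trans hbc) x := by
  have e1 : ipr (hab.trans hbc) x
      = ((idg (hab.trans hbc) : F))⁻¹ • inclusion hbc (inclusion hab (itr (hab.trans hbc) x)) :=
    by rw [incl_incl]; rfl
  rw [e1, ipr_fsmul, ipr_inclusion]

lemma ipr_id (h : C ≤ C) [FiniteDimensional F C] [CharZero F] (x : C) : ipr h x = x := by
  have e : x = inclusion h x := Subtype.ext rfl
  conv_lhs => rw [e]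
  rw [ipr_inclusion]
  exact (Subtype.ext rfl : inclusion h x = x)

end helper

/-- With `ℚ_{p,n}^+` the set of `x ∈ ℚ_p(μ_{p^n})` whose traces down to
`ℚ_p(μ_{p^{m+1}})` land in `ℚ_p(μ_{p^m})` for all even `0 ≤ m ≤ n-1`, and `ℚ_{p,n}^-`
defined analogously with odd `m`, one has `ℚ_{p,n}^+ ∩ ℚ_{p,n}^- = ℚ_p` and
`ℚ_{p,n}^+ + ℚ_{p,n}^- = ℚ_p(μ_{p^n})`. -/
theorem plus_minus_subspaces (p : ℕ) [Fact p.Prime] (hodd : Odd p)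
    (K : Type*) [Field K] [Algebra ℚ_[p] K]
    (ζ : ℕ → K)
    (hζ : ∀ k, IsPrimitiveRoot (ζ k) (p ^ k))
    (hcompat : ∀ k, ζ (k + 1) ^ p = ζ k)
    (hle : ∀ a b : ℕ, a ≤ b → adjoin ℚ_[p] ({ζ a} : Set K) ≤ adjoin ℚ_[p] ({ζ b} : Set K))
    (n : ℕ) (hn : 1 ≤ n) :
    let Qplus : Set ↥(adjoin ℚ_[p] ({ζ n} : Set K)) :=
      {x | ∀ m : ℕ, (hmn : m < n) → Even m →
        (letI : Algebra ↥(adjoin ℚ_[p] ({ζ (m + 1)} : Set K))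
            ↥(adjoin ℚ_[p] ({ζ n} : Set K)) :=
          ((IntermediateField.inclusion (hle (m + 1) n hmn)).toRingHom).toAlgebra
         ((Algebra.trace (adjoin ℚ_[p] ({ζ (m + 1)} : Set K))
            (adjoin ℚ_[p] ({ζ n} : Set K)) x : ↥(adjoin ℚ_[p] ({ζ (m + 1)} : Set K))) : K)
            ∈ adjoin ℚ_[p] ({ζ m} : Set K))}
    let Qminus : Set ↥(adjoin ℚ_[p] ({ζ n} : Set K)) :=
      {x | ∀ m : ℕ, (hmn : m < n) → Odd m →
        (letI : Algebra ↥(adjoin ℚ_[p] ({ζ (m + 1)} : Set K))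
            ↥(adjoin ℚ_[p] ({ζ n} : Set K)) :=
          ((IntermediateField.inclusion (hle (m + 1) n hmn)).toRingHom).toAlgebra
         ((Algebra.trace (adjoin ℚ_[p] ({ζ (m + 1)} : Set K))
            (adjoin ℚ_[p] ({ζ n} : Set K)) x : ↥(adjoin ℚ_[p] ({ζ (m + 1)} : Set K))) : K)
            ∈ adjoin ℚ_[p] ({ζ m} : Set K))}
    Qplus ∩ Qminus = Set.range (algebraMap ℚ_[p] ↥(adjoin ℚ_[p] ({ζ n} : Set K))) ∧
      ∀ x : ↥(adjoin ℚ_[p] ({ζ n} : Set K)), ∃ a ∈ Qplus, ∃ b ∈ Qminus, x = a + b := by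
  intro Qplus Qminus
  have fd : ∀ k, FiniteDimensional ℚ_[p] ↥(adjoin ℚ_[p] ({ζ k} : Set K)) := by
    intro k
    have hint : IsIntegral ℚ_[p] (ζ k) := by
      refine ⟨Polynomial.X ^ (p ^ k) - Polynomial.C 1,
        Polynomial.monic_X_pow_sub_C 1 (pow_ne_zero k (Nat.Prime.ne_zero Fact.out)), ?_⟩
      simp [(hζ k).pow_eq_one]
    exact IntermediateField.adjoin.finiteDimensional hint
  -- the auxiliary projection family
  set g : ℕ → ↥(adjoin ℚ_[p] ({ζ n} : Set K)) → ↥(adjoin ℚ_[p] ({ζ n} : Set K)) :=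
    fun k x => if hk : k ≤ n then ipr (hle k n hk) x else x with hg
  have gdef : ∀ (k : ℕ) (hk : k ≤ n) (x), g k x = ipr (hle k n hk) x := by
    intro k hk x; simp [hg, hk]
  have g_add : ∀ (k : ℕ) (x y), g k (x + y) = g k x + g k y := by
    intro k x y
    by_cases hk : k ≤ n
    · rw [gdef k hk, gdef k hk, gdef k hk, ipr_add]
    · simp [hg, hk]
  have g_sub : ∀ (k : ℕ) (x y), g k (x - y) = g k x - g k y := by
    intro k x y
    by_cases hk : k ≤ n
    · rw [gdef k hk, gdef k hk, gdef k hk, ipr_sub]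
    · simp [hg, hk]
  have g_zero : ∀ (k : ℕ), g k 0 = 0 := by
    intro k
    by_cases hk : k ≤ n
    · rw [gdef k hk, ipr_zero]
    · simp [hg, hk]
  have g_comp : ∀ (k j : ℕ) (hkj : k ≤ j) (hjn : j ≤ n) (x),
      g k (g j x) = g k x := by
    intro k j hkj hjn x
    haveI := fd j; haveI := fd n
    rw [gdef j hjn, gdef k (hkj.trans hjn), gdef k (hkj.trans hjn)]
    exact ipr_comp (hle k j hkj) (hle j n hjn) x
  have g_fix : ∀ (k j : ℕ) (hjk : j ≤ k) (hkn : k ≤ n) (x),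
      g k (g j x) = g j x := by
    intro k j hjk hkn x
    haveI := fd n
    rw [gdef j (hjk.trans hkn), gdef k hkn]
    exact ipr_fix (hle j k hjk) (hle k n hkn) x
  have g_id : ∀ x, g n x = x := by
    intro x
    haveI := fd n
    rw [gdef n le_rfl]
    exact ipr_id (hle n n le_rfl) x
  have smem : ∀ (S : IntermediateField ℚ_[p] K) (c : ℚ_[p]) (w : K), w ∈ S → c • w ∈ S := by
    intro S c w hw
    rw [Algebra.smul_def]
    exact mul_mem (IntermediateField.algebraMap_mem _ _) hw
  have equiv : ∀ (m : ℕ) (hmn : m < n) (x : ↥(adjoin ℚ_[p] ({ζ n} : Set K))),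
      ((((itr (hle (m + 1) n hmn) x) : ↥(adjoin ℚ_[p] ({ζ (m + 1)} : Set K))) : K)
        ∈ adjoin ℚ_[p] ({ζ m} : Set K)) ↔ g (m + 1) x = g m x := by
    intro m hmn x
    haveI := fd n; haveI := fd (m + 1); haveI := fd m
    have h1 : adjoin ℚ_[p] ({ζ (m + 1)} : Set K) ≤ adjoin ℚ_[p] ({ζ n} : Set K) :=
      hle (m + 1) n hmn
    have h0 : adjoin ℚ_[p] ({ζ m} : Set K) ≤ adjoin ℚ_[p] ({ζ (m + 1)} : Set K) :=
      hle m (m + 1) (Nat.le_succ m)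
    have hd : ((idg (hle (m + 1) n hmn) : ℚ_[p])) ≠ 0 := by
      exact_mod_cast idg_ne_zero (hle (m + 1) n hmn)
    rw [gdef (m + 1) hmn, gdef m (le_of_lt hmn)]
    constructor
    · intro hC
      have e1 : ipr (hle (m + 1) n hmn) x = ((idg (hle (m + 1) n hmn) : ℚ_[p]))⁻¹ •
          inclusion (h0.trans h1)
            (⟨_, hC⟩ : ↥(adjoin ℚ_[p] ({ζ m} : Set K))) := by
        show ((idg (hle (m + 1) n hmn) : ℚ_[p]))⁻¹ •
            inclusion (hle (m + 1) n hmn) (itr (hle (m + 1) n hmn) x) = _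
        congr 1
      have e2 : ipr (hle m n (le_of_lt hmn)) x
          = ipr (hle m n (le_of_lt hmn)) (ipr (hle (m + 1) n hmn) x) :=
        (ipr_comp h0 h1 x).symm
      rw [e2, e1, ipr_fsmul, ipr_inclusion]
    · intro hEq
      have e3 : inclusion (hle (m + 1) n hmn) (itr (hle (m + 1) n hmn) x)
          = (idg (hle (m + 1) n hmn) : ℚ_[p]) • ipr (hle (m + 1) n hmn) x := by
        show _ = (idg (hle (m + 1) n hmn) : ℚ_[p]) • (((idg (hle (m + 1) n hmn) : ℚ_[p]))⁻¹ •
          inclusion (hle (m + 1) n hmn) (itr (hle (m + 1) n hmn) x))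
        rw [smul_inv_smul₀ hd]
      have e4 : (((itr (hle (m + 1) n hmn) x) : ↥(adjoin ℚ_[p] ({ζ (m + 1)} : Set K))) : K)
          = (idg (hle (m + 1) n hmn) : ℚ_[p]) • ((idg (hle m n (le_of_lt hmn)) : ℚ_[p]))⁻¹ •
            (((itr (hle m n (le_of_lt hmn)) x) : ↥(adjoin ℚ_[p] ({ζ m} : Set K))) : K) := by
        calc (((itr (hle (m + 1) n hmn) x) : ↥(adjoin ℚ_[p] ({ζ (m + 1)} : Set K))) : K)
            = ((inclusion (hle (m + 1) n hmn) (itr (hle (m + 1) n hmn) x) : _) : K) := rfl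
          _ = (((idg (hle (m + 1) n hmn) : ℚ_[p]) • ipr (hle (m + 1) n hmn) x : _) : K) := by
              rw [e3]
          _ = (idg (hle (m + 1) n hmn) : ℚ_[p]) • ((ipr (hle (m + 1) n hmn) x : _) : K) := rfl
          _ = (idg (hle (m + 1) n hmn) : ℚ_[p]) • ((ipr (hle m n (le_of_lt hmn)) x : _) : K) := by
              rw [hEq]
          _ = _ := rfl
      rw [e4]
      exact smem _ _ _ (smem _ _ _ (itr (hle m n (le_of_lt hmn)) x).2)
  have hbot : adjoin ℚ_[p] ({ζ 0} : Set K) = ⊥ := by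
    have hz0 : ζ 0 = 1 := by
      have h := (hζ 0).pow_eq_one
      rwa [pow_zero, pow_one] at h
    rw [hz0]
    refine le_antisymm (adjoin_le_iff.2 ?_) bot_le
    simp only [Set.singleton_subset_iff, SetLike.mem_coe]
    exact one_mem _
  have g_alg : ∀ (k : ℕ) (hk : k ≤ n) (r : ℚ_[p]),
      g k (algebraMap ℚ_[p] ↥(adjoin ℚ_[p] ({ζ n} : Set K)) r)
        = algebraMap ℚ_[p] ↥(adjoin ℚ_[p] ({ζ n} : Set K)) r := by
    intro k hk r
    haveI := fd n
    rw [gdef k hk]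
    have e : (algebraMap ℚ_[p] ↥(adjoin ℚ_[p] ({ζ n} : Set K)) r)
        = inclusion (hle k n hk) (algebraMap ℚ_[p] ↥(adjoin ℚ_[p] ({ζ k} : Set K)) r) :=
      Subtype.ext rfl
    rw [e, ipr_inclusion]
  constructor
  · ext x
    constructor
    · rintro ⟨hp, hm⟩
      have hall : ∀ k, k ≤ n → g k x = g 0 x := by
        intro k
        induction k with
        | zero => intro _; rfl
        | succ k ih =>
          intro hk1
          have hk : k < n := hk1
          have hstep : g (k + 1) x = g k x := by
            rcases Nat.even_or_odd k with he | ho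
            · exact (equiv k hk x).1 (hp k hk he)
            · exact (equiv k hk x).1 (hm k hk ho)
          rw [hstep]
          exact ih (le_of_lt hk)
      have hx0 : x = g 0 x := by rw [← hall n le_rfl, g_id]
      haveI := fd n; haveI := fd 0
      have hw : ((itr (hle 0 n (Nat.zero_le n)) x : _) : K)
          ∈ (⊥ : IntermediateField ℚ_[p] K) := by
        rw [← hbot]; exact (itr (hle 0 n (Nat.zero_le n)) x).2
      obtain ⟨r, hr⟩ := IntermediateField.mem_bot.1 hw
      refine ⟨(idg (hle 0 n (Nat.zero_le n)) : ℚ_[p])⁻¹ * r, ?_⟩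
      rw [gdef 0 (Nat.zero_le n)] at hx0
      refine Subtype.ext ?_
      have e2 : ((ipr (hle 0 n (Nat.zero_le n)) x : _) : K)
          = (idg (hle 0 n (Nat.zero_le n)) : ℚ_[p])⁻¹ • algebraMap ℚ_[p] K r := by
        rw [hr]; rfl
      calc ((algebraMap ℚ_[p] ↥(adjoin ℚ_[p] ({ζ n} : Set K))
              ((idg (hle 0 n (Nat.zero_le n)) : ℚ_[p])⁻¹ * r) : _) : K)
          = algebraMap ℚ_[p] K ((idg (hle 0 n (Nat.zero_le n)) : ℚ_[p])⁻¹ * r) := rfl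
        _ = (idg (hle 0 n (Nat.zero_le n)) : ℚ_[p])⁻¹ • algebraMap ℚ_[p] K r := by
            rw [map_mul, ← Algebra.smul_def]
        _ = ((ipr (hle 0 n (Nat.zero_le n)) x : _) : K) := e2.symm
        _ = (x : K) := by rw [← hx0]
    · rintro ⟨r, rfl⟩
      have hcond : ∀ (m : ℕ) (hmn : m < n),
          (((itr (hle (m + 1) n hmn)
            (algebraMap ℚ_[p] ↥(adjoin ℚ_[p] ({ζ n} : Set K)) r) : _) : K)
            ∈ adjoin ℚ_[p] ({ζ m} : Set K)) := by
        intro m hmn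
        refine (equiv m hmn _).2 ?_
        rw [g_alg (m + 1) hmn r, g_alg m (le_of_lt hmn) r]
      exact ⟨fun m hmn _ => hcond m hmn, fun m hmn _ => hcond m hmn⟩
  · intro x
    have main : ∀ j, j ≤ n → ∃ a b : ↥(adjoin ℚ_[p] ({ζ n} : Set K)),
        g j x = a + b ∧ g j a = a ∧ g j b = b ∧
        (∀ m, m < n → Even m → g (m + 1) a = g m a) ∧
        (∀ m, m < n → Odd m → g (m + 1) b = g m b) := by
      intro j
      induction j with
      | zero =>
        intro _
        refine ⟨g 0 x, 0, by rw [add_zero], g_comp 0 0 le_rfl (Nat.zero_le n) x,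
          g_zero 0, ?_, ?_⟩
        · intro m hm _
          rw [g_fix (m + 1) 0 (Nat.zero_le _) hm x, g_fix m 0 (Nat.zero_le _) (le_of_lt hm) x]
        · intro m _ _
          rw [g_zero, g_zero]
      | succ j ih =>
        intro hj1
        have hj : j ≤ n := Nat.le_of_succ_le hj1
        obtain ⟨a, b, h1, h2, h3, h4, h5⟩ := ih hj
        set δ := g (j + 1) x - g j x with hδ
        have hsplit : g (j + 1) x = a + b + δ := by rw [hδ, h1]; ring
        have hfixa : g (j + 1) a = a := by
          conv_lhs => rw [← h2]
          rw [g_fix (j + 1) j (Nat.le_succ j) hj1 a, h2]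
        have hfixb : g (j + 1) b = b := by
          conv_lhs => rw [← h3]
          rw [g_fix (j + 1) j (Nat.le_succ j) hj1 b, h3]
        have hδfix : g (j + 1) δ = δ := by
          rw [hδ, g_sub, g_comp (j + 1) (j + 1) le_rfl hj1, g_fix (j + 1) j (Nat.le_succ j) hj1]
        have hδsmall : ∀ k, k ≤ j → g k δ = 0 := by
          intro k hk
          rw [hδ, g_sub, g_comp k (j + 1) (hk.trans (Nat.le_succ j)) hj1,
            g_comp k j hk hj, sub_self]
        have hδeq : ∀ m, m < n → m ≠ j → g (m + 1) δ = g m δ := by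
          intro m hm hne
          rcases lt_or_gt_of_ne hne with hlt | hgt
          · rw [hδsmall (m + 1) hlt, hδsmall m (le_of_lt hlt)]
          · have h1m : j + 1 ≤ m := hgt
            rw [hδ, g_sub, g_sub,
              g_fix (m + 1) (j + 1) (by omega) (by omega) x,
              g_fix (m + 1) j (by omega) (by omega) x,
              g_fix m (j + 1) (by omega) (by omega) x,
              g_fix m j (by omega) (by omega) x]
        rcases Nat.even_or_odd j with hev | hod
        · refine ⟨a, b + δ, by rw [hsplit]; ring, hfixa,
            by rw [g_add, hfixb, hδfix], h4, ?_⟩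
          intro m hm hmo
          have hne : m ≠ j := by rintro rfl; exact (Nat.not_even_iff_odd.2 hmo) hev
          rw [g_add, g_add, h5 m hm hmo, hδeq m hm hne]
        · refine ⟨a + δ, b, by rw [hsplit]; ring,
            by rw [g_add, hfixa, hδfix], hfixb, ?_, h5⟩
          intro m hm hme
          have hne : m ≠ j := by rintro rfl; exact (Nat.not_odd_iff_even.2 hme) hod
          rw [g_add, g_add, h4 m hm hme, hδeq m hm hne]
    obtain ⟨a, b, h1, _, _, h4, h5⟩ := main n le_rfl
    refine ⟨a, ?_, b, ?_, ?_⟩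
    · intro m hmn he
      exact (equiv m hmn a).2 (h4 m hmn he)
    · intro m hmn ho
      exact (equiv m hmn b).2 (h5 m hmn ho)
    · rw [← g_id x, h1]
end

section
/- Let p be an odd prime and m ≥ 2. The ℚ_p-dimension of the ℚ_p-span of the Galois conjugates of ζ_{p^m} (a primitive p^m-th root of unity) inside ℚ_p(μ_{p^m}) equals dim_{ℚ_p} ℚ_p(μ_{p^m}) − dim_{ℚ_p} ℚ_p(μ_{p^{m-1}}) = p^{m-2}(p-1)^2. -/
open IntermediateField

open Polynomial

theorem cyclotomic_prime_pow_irreducible_padic (p : ℕ) [hp : Fact p.Prime] (k : ℕ) :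
    Irreducible (cyclotomic (p ^ (k + 1)) ℚ_[p]) := by
  have hmonic : (cyclotomic (p ^ (k + 1)) ℤ_[p]).Monic := cyclotomic.monic _ _
  have hpprime : Prime (p : ℤ_[p]) := PadicInt.prime_p
  have hgmonic : ((cyclotomic (p ^ (k + 1)) ℤ_[p]).comp (X + 1)).Monic := by
    simpa using hmonic.comp_X_add_C 1
  have hmap : ((cyclotomic (p ^ (k + 1)) ℤ).comp (X + 1)).map (Int.castRingHom ℤ_[p]) =
      (cyclotomic (p ^ (k + 1)) ℤ_[p]).comp (X + 1) := by
    rw [Polynomial.map_comp, map_cyclotomic_int]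
    simp
  have hg : ((cyclotomic (p ^ (k + 1)) ℤ_[p]).comp (X + 1)).IsEisensteinAt
      (Ideal.span {(p : ℤ_[p])}) := by
    have hZ := cyclotomic_prime_pow_comp_X_add_one_isEisensteinAt p k
    have hdeg : ((cyclotomic (p ^ (k + 1)) ℤ_[p]).comp (X + 1)).natDegree =
        ((cyclotomic (p ^ (k + 1)) ℤ).comp (X + 1)).natDegree := by
      rw [natDegree_comp, natDegree_comp, natDegree_cyclotomic, natDegree_cyclotomic]
      have h1 : (X + 1 : ℤ_[p][X]).natDegree = 1 := by simpa using natDegree_X_add_C (1 : ℤ_[p])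
      have h2 : (X + 1 : ℤ[X]).natDegree = 1 := by simpa using natDegree_X_add_C (1 : ℤ)
      rw [h1, h2]
    refine ⟨?_, ?_, ?_⟩
    · rw [hgmonic.leadingCoeff]
      exact (Ideal.ne_top_iff_one _).mp
        (fun h => hpprime.not_unit ((Ideal.span_singleton_eq_top).mp h))
    · intro n hn
      rw [hdeg] at hn
      obtain ⟨c, hc⟩ := Ideal.mem_span_singleton.mp (hZ.mem hn)
      refine Ideal.mem_span_singleton.mpr ⟨(c : ℤ_[p]), ?_⟩
      rw [← hmap, coeff_map, hc]
      simp
    · rw [coeff_zero_eq_eval_zero, eval_comp]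
      simp only [eval_add, eval_X, eval_one, zero_add]
      rw [eval_one_cyclotomic_prime_pow, Ideal.span_singleton_pow, Ideal.mem_span_singleton]
      rintro ⟨c, hc⟩
      have h1 : (p : ℤ_[p]) * 1 = (p : ℤ_[p]) * (p * c) := by linear_combination hc
      have : (1 : ℤ_[p]) = p * c := mul_left_cancel₀ hpprime.ne_zero h1
      exact hpprime.not_isUnit (IsUnit.of_mul_eq_one _ this.symm)
  have hgirr : Irreducible ((cyclotomic (p ^ (k + 1)) ℤ_[p]).comp (X + 1)) := by
    refine hg.irreducible ((Ideal.span_singleton_prime hpprime.ne_zero).mpr hpprime)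
      hgmonic.isPrimitive ?_
    rw [natDegree_comp, natDegree_cyclotomic]
    have h1 : (X + 1 : ℤ_[p][X]).natDegree = 1 := by
      simpa using natDegree_X_add_C (1 : ℤ_[p])
    rw [h1, mul_one]
    exact Nat.totient_pos.mpr (pow_pos hp.out.pos _)
  have hfirr : Irreducible (cyclotomic (p ^ (k + 1)) ℤ_[p]) := by
    have he : (algEquivAevalXAddC (1 : ℤ_[p])) (cyclotomic (p ^ (k + 1)) ℤ_[p]) =
        (cyclotomic (p ^ (k + 1)) ℤ_[p]).comp (X + 1) := by
      rw [algEquivAevalXAddC_apply, ← comp_eq_aeval]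
      simp
    exact (MulEquiv.irreducible_iff (algEquivAevalXAddC (1 : ℤ_[p]))).mp (he ▸ hgirr)
  have := (hmonic.irreducible_iff_irreducible_map_fraction_map (K := ℚ_[p])).mp hfirr
  rwa [map_cyclotomic] at this

/-- For `m ≥ 2`, the `ℚ_p`-span of the Galois conjugates of `ζ_{p^m}`
has dimension `[ℚ_p(μ_{p^m}) : ℚ_p] − [ℚ_p(μ_{p^{m-1}}) : ℚ_p] = p^{m-2}(p-1)²`. -/
theorem dim_span_conjugates_zeta (p : ℕ) [Fact p.Prime] (hodd : Odd p)
    (K : Type*) [Field K] [Algebra ℚ_[p] K] [IsAlgClosed K] [Algebra.IsAlgebraic ℚ_[p] K]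
    (ζ : ℕ → K)
    (hζ : ∀ k, IsPrimitiveRoot (ζ k) (p ^ k))
    (hcompat : ∀ k, ζ (k + 1) ^ p = ζ k)
    (m : ℕ) (hm : 2 ≤ m) :
    Module.finrank ℚ_[p]
        ↥(Submodule.span ℚ_[p] {y : K | ∃ σ : K ≃ₐ[ℚ_[p]] K, y = σ (ζ m)}) =
      Module.finrank ℚ_[p] ↥(adjoin ℚ_[p] ({ζ m} : Set K)) -
        Module.finrank ℚ_[p] ↥(adjoin ℚ_[p] ({ζ (m - 1)} : Set K)) ∧
    Module.finrank ℚ_[p]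
        ↥(Submodule.span ℚ_[p] {y : K | ∃ σ : K ≃ₐ[ℚ_[p]] K, y = σ (ζ m)}) =
      p ^ (m - 2) * (p - 1) ^ 2 := by
  classical
  have hp : p.Prime := Fact.out
  obtain ⟨t, rfl⟩ : ∃ t, m = t + 2 := ⟨m - 2, by omega⟩
  rw [show t + 2 - 1 = t + 1 by omega, show t + 2 - 2 = t by omega]
  set q : ℕ := p ^ (t + 1) with hq
  haveI : NeZero q := ⟨pow_ne_zero _ hp.ne_zero⟩
  haveI : NeZero (p ^ (t + 2)) := ⟨pow_ne_zero _ hp.ne_zero⟩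
  haveI : NeZero ((p ^ (t + 2) : ℕ) : ℚ_[p]) :=
    ⟨Nat.cast_ne_zero.mpr (pow_ne_zero _ hp.ne_zero)⟩
  haveI : NeZero ((p ^ (t + 1) : ℕ) : ℚ_[p]) :=
    ⟨Nat.cast_ne_zero.mpr (pow_ne_zero _ hp.ne_zero)⟩
  haveI : IsAlgClosure ℚ_[p] K := ⟨‹IsAlgClosed K›, ‹_›⟩
  have hq0 : 0 < q := pow_pos hp.pos _
  have hirr : Irreducible (Polynomial.cyclotomic (p ^ (t + 2)) ℚ_[p]) :=
    cyclotomic_prime_pow_irreducible_padic p (t + 1)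
  have hirr' : Irreducible (Polynomial.cyclotomic (p ^ (t + 1)) ℚ_[p]) :=
    cyclotomic_prime_pow_irreducible_padic p t
  have hint : ∀ x : K, IsIntegral ℚ_[p] x := fun x =>
    (Algebra.IsAlgebraic.isAlgebraic x).isIntegral
  have hmin : minpoly ℚ_[p] (ζ (t + 2)) = Polynomial.cyclotomic (p ^ (t + 2)) ℚ_[p] :=
    ((hζ (t + 2)).minpoly_eq_cyclotomic_of_irreducible hirr).symm
  have hmin' : minpoly ℚ_[p] (ζ (t + 1)) = Polynomial.cyclotomic (p ^ (t + 1)) ℚ_[p] :=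
    ((hζ (t + 1)).minpoly_eq_cyclotomic_of_irreducible hirr').symm
  -- dimensions of the cyclotomic fields
  have hfr : Module.finrank ℚ_[p] ↥(adjoin ℚ_[p] ({ζ (t + 2)} : Set K)) =
      (p ^ (t + 2)).totient := by
    rw [IntermediateField.adjoin.finrank (hint _), hmin, Polynomial.natDegree_cyclotomic]
  have hfr' : Module.finrank ℚ_[p] ↥(adjoin ℚ_[p] ({ζ (t + 1)} : Set K)) =
      (p ^ (t + 1)).totient := by
    rw [IntermediateField.adjoin.finrank (hint _), hmin', Polynomial.natDegree_cyclotomic]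
  -- existence of conjugations
  have hconj : ∀ a : ℕ, Nat.Coprime a (p ^ (t + 2)) →
      ∃ σ : K ≃ₐ[ℚ_[p]] K, σ (ζ (t + 2)) = ζ (t + 2) ^ a := by
    intro a ha
    have hprim : IsPrimitiveRoot (ζ (t + 2) ^ a) (p ^ (t + 2)) :=
      (hζ (t + 2)).pow_of_coprime a ha
    have hmin2 : minpoly ℚ_[p] (ζ (t + 2) ^ a) = minpoly ℚ_[p] (ζ (t + 2)) := by
      rw [hmin, ← (hprim.minpoly_eq_cyclotomic_of_irreducible hirr)]
    obtain ⟨σ, hσ⟩ := (Normal.minpoly_eq_iff_mem_orbit (F := ℚ_[p]) (E := K)).mp hmin2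
    exact ⟨σ, hσ⟩
  -- the linearly independent family
  set d : ℕ := (minpoly ℚ_[p] (ζ (t + 2))).natDegree with hdd
  have hd : d = q * (p - 1) := by
    rw [hdd, hmin, Polynomial.natDegree_cyclotomic,
      Nat.totient_prime_pow hp (by omega : 0 < t + 2)]
    rfl
  set emb : (ZMod q)ˣ × Fin (p - 1) → ℕ :=
    fun i => (i.1 : ZMod q).val + i.2.val * q with hemb
  have hlt : ∀ i, emb i < d := by
    rintro ⟨u, c⟩
    have h1 : (u : ZMod q).val < q := ZMod.val_lt _
    have h2 : c.val + 1 ≤ p - 1 := c.isLt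
    calc (u : ZMod q).val + c.val * q < q + c.val * q := by omega
    _ = (c.val + 1) * q := by ring
    _ ≤ (p - 1) * q := Nat.mul_le_mul_right q h2
    _ = d := by rw [hd, mul_comm]
  have hinj : Function.Injective emb := by
    rintro ⟨u1, c1⟩ ⟨u2, c2⟩ h
    simp only [hemb] at h
    have hv1 : (u1 : ZMod q).val < q := ZMod.val_lt _
    have hv2 : (u2 : ZMod q).val < q := ZMod.val_lt _
    have e1 : (u1 : ZMod q).val = (u2 : ZMod q).val := by
      have := congrArg (· % q) h
      simpa [Nat.add_mul_mod_self_right, Nat.mod_eq_of_lt hv1, Nat.mod_eq_of_lt hv2] using this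
    have e2 : c1.val = c2.val := by
      have := congrArg (· / q) h
      simpa [Nat.add_mul_div_right _ _ hq0, Nat.div_eq_of_lt hv1, Nat.div_eq_of_lt hv2] using this
    exact Prod.ext (Units.ext (ZMod.val_injective q e1)) (Fin.ext e2)
  set v : (ZMod q)ˣ × Fin (p - 1) → K := fun i => ζ (t + 2) ^ emb i with hv
  have hvlin : LinearIndependent ℚ_[p] v := by
    have hpow := linearIndependent_pow (K := ℚ_[p]) (ζ (t + 2))
    exact hpow.comp (fun i => (⟨emb i, hlt i⟩ : Fin d))
      (fun i j hij => hinj (congrArg Fin.val hij))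
  -- the key vanishing sum
  have hsum : ∀ b : ℕ, ∑ c ∈ Finset.range p, ζ (t + 2) ^ (b + c * q) = 0 := by
    intro b
    have hη : IsPrimitiveRoot (ζ (t + 2) ^ q) p :=
      (hζ (t + 2)).pow (pow_pos hp.pos _) (by rw [hq, ← pow_succ])
    calc ∑ c ∈ Finset.range p, ζ (t + 2) ^ (b + c * q)
        = ζ (t + 2) ^ b * ∑ c ∈ Finset.range p, (ζ (t + 2) ^ q) ^ c := by
          rw [Finset.mul_sum]
          refine Finset.sum_congr rfl fun c _ => ?_
          rw [pow_add, mul_comm c q, pow_mul]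
      _ = 0 := by rw [hη.geom_sum_eq_zero hp.one_lt, mul_zero]
  -- range v is contained in the conjugates
  have hrange : ∀ i, v i ∈ {y : K | ∃ σ : K ≃ₐ[ℚ_[p]] K, y = σ (ζ (t + 2))} := by
    rintro ⟨u, c⟩
    have hvalco : Nat.Coprime ((u : ZMod q)).val q := ZMod.val_coe_unit_coprime u
    have hpq : p ∣ q := dvd_pow_self p (Nat.succ_ne_zero t)
    have hndvd : ¬ p ∣ emb ⟨u, c⟩ := by
      intro hdvd
      simp only [hemb] at hdvd
      have h1 : p ∣ (u : ZMod q).val := by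
        have h1' := Nat.dvd_sub hdvd (hpq.mul_left c.val)
        rwa [Nat.add_sub_cancel] at h1'
      have h2 : p ∣ Nat.gcd ((u : ZMod q)).val q := Nat.dvd_gcd h1 hpq
      rw [Nat.coprime_iff_gcd_eq_one.mp hvalco] at h2
      exact hp.one_lt.ne' (Nat.eq_one_of_dvd_one h2 ▸ rfl)
    have hco : Nat.Coprime (emb ⟨u, c⟩) (p ^ (t + 2)) :=
      Nat.Coprime.pow_right _ (Nat.coprime_comm.mp ((hp.coprime_iff_not_dvd).mpr hndvd))
    obtain ⟨σ, hσ⟩ := hconj _ hco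
    exact ⟨σ, hσ.symm⟩
  -- conjugates are in the span of range v
  have hSsub : {y : K | ∃ σ : K ≃ₐ[ℚ_[p]] K, y = σ (ζ (t + 2))} ⊆
      ↑(Submodule.span ℚ_[p] (Set.range v)) := by
    rintro y ⟨σ, rfl⟩
    have hyprim : IsPrimitiveRoot (σ (ζ (t + 2))) (p ^ (t + 2)) :=
      (hζ (t + 2)).map_of_injective σ.injective
    obtain ⟨a, ha_lt, ha_eq⟩ := (hζ (t + 2)).eq_pow_of_pow_eq_one hyprim.pow_eq_one
    have haco : Nat.Coprime a (p ^ (t + 2)) :=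
      ((hζ (t + 2)).pow_iff_coprime (pow_pos hp.pos _) a).mp (ha_eq ▸ hyprim)
    have hpq : p ∣ q := dvd_pow_self p (Nat.succ_ne_zero t)
    set b : ℕ := a % q with hb_def
    set c : ℕ := a / q with hc_def
    have hb : b < q := Nat.mod_lt _ hq0
    have hc : c < p := Nat.div_lt_iff_lt_mul hq0 |>.mpr (by
      rw [mul_comm, hq, ← pow_succ]; exact ha_lt)
    have hab : b + c * q = a := Nat.mod_add_div' a q
    have hpb : ¬ p ∣ b := by
      intro hdvd
      have h1 : p ∣ a := hab ▸ dvd_add hdvd (hpq.mul_left c)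
      have h2 : p ∣ Nat.gcd a (p ^ (t + 2)) :=
        Nat.dvd_gcd h1 (dvd_pow_self p (Nat.succ_ne_zero (t + 1)))
      rw [Nat.coprime_iff_gcd_eq_one.mp haco] at h2
      exact hp.one_lt.ne' (Nat.eq_one_of_dvd_one h2 ▸ rfl)
    have hbq : Nat.Coprime b q :=
      Nat.Coprime.pow_right _ (Nat.coprime_comm.mp ((hp.coprime_iff_not_dvd).mpr hpb))
    set u : (ZMod q)ˣ := ZMod.unitOfCoprime b hbq with hu
    have hval : ((u : ZMod q)).val = b := by
      rw [hu, ZMod.coe_unitOfCoprime, ZMod.val_natCast, Nat.mod_eq_of_lt hb]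
    by_cases hcase : c < p - 1
    · refine Submodule.subset_span ⟨⟨u, ⟨c, hcase⟩⟩, ?_⟩
      show ζ (t + 2) ^ ((u : ZMod q).val + c * q) = σ (ζ (t + 2))
      rw [hval, hab, ha_eq]
    · have hceq : c = p - 1 := by omega
      rw [← ha_eq, ← hab, hceq]
      have h0 := hsum b
      rw [show p = (p - 1) + 1 from (Nat.succ_pred_eq_of_pos hp.pos).symm,
        Finset.sum_range_succ] at h0
      have hy : ζ (t + 2) ^ (b + (p - 1) * q) =
          - ∑ c' ∈ Finset.range (p - 1), ζ (t + 2) ^ (b + c' * q) :=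
        eq_neg_of_add_eq_zero_right h0
      rw [hy]
      refine Submodule.neg_mem _ (Submodule.sum_mem _ fun c' hc' => Submodule.subset_span
        ⟨⟨u, ⟨c', Finset.mem_range.mp hc'⟩⟩, ?_⟩)
      show ζ (t + 2) ^ ((u : ZMod q).val + c' * q) = ζ (t + 2) ^ (b + c' * q)
      rw [hval]
  have hspan : Submodule.span ℚ_[p] {y : K | ∃ σ : K ≃ₐ[ℚ_[p]] K, y = σ (ζ (t + 2))} =
      Submodule.span ℚ_[p] (Set.range v) :=
    le_antisymm (Submodule.span_le.mpr hSsub)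
      (Submodule.span_le.mpr (Set.range_subset_iff.mpr fun i => Submodule.subset_span (hrange i)))
  have hcard : Module.finrank ℚ_[p]
      ↥(Submodule.span ℚ_[p] {y : K | ∃ σ : K ≃ₐ[ℚ_[p]] K, y = σ (ζ (t + 2))}) =
      p ^ t * (p - 1) * (p - 1) := by
    rw [hspan, finrank_span_eq_card hvlin, Fintype.card_prod, ZMod.card_units_eq_totient,
      Fintype.card_fin, hq, Nat.totient_prime_pow hp (Nat.succ_pos t)]
    simp
  have htot : (p ^ (t + 2)).totient = p ^ (t + 1) * (p - 1) :=
    by rw [Nat.totient_prime_pow hp (by omega : 0 < t + 2)]; simp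
  have htot' : (p ^ (t + 1)).totient = p ^ t * (p - 1) :=
    by rw [Nat.totient_prime_pow hp (Nat.succ_pos t)]; simp
  have harith : p ^ t * (p - 1) * (p - 1) = p ^ (t + 1) * (p - 1) - p ^ t * (p - 1) := by
    obtain ⟨r, hr⟩ : ∃ r, p = r + 1 := ⟨p - 1, (Nat.succ_pred_eq_of_pos hp.pos).symm⟩
    rw [hr, Nat.add_sub_cancel, pow_succ]
    generalize (r + 1) ^ t = B
    have h1 : B * (r + 1) * r = B * r * r + B * r := by ring
    rw [h1, Nat.add_sub_cancel]
  constructor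
  · rw [hcard, hfr, hfr', htot, htot', harith]
  · rw [hcard]
    ring
end
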